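/- arXiv:1602.01162 — 3 statements merged into one kernel-verified Lean document; each statement's English description precedes it below -/
import Mathlib

section
/- Let D ∈ 𝒟′_n and let D⁻ be D with the edge (v_n,v_t) deleted, where 3 ≤ t ≤ n−1 is the largest index such that (v_n,v_t) ∈ E(D). Let φ and ψ be the Perron vectors of D and D⁻, and set f_i = φ(v_i)/φ(v_n), g_i = ψ(v_i)/ψ(v_n). If t ≥ 5, then for every 3 ≤ k ≤ t−2: (d) (g_{t−k}−f_{t−k})/(t−1)_k ≥ (1/d⁺_D(v_n))·(1 − (4/3)Σ_{j=1}^{k−2} 1/(t−j)_2 − (1/(d⁺_D(v_n)−1))Σ_{j=1}^{k−1} 1/(t−1)_j) > 0; and (e) (g_{t−k}−f_{t−k})/(t−1)_k ≤ 1/d⁺_D(v_n). Here (m)_k = m(m−1)⋯(m−k+1) is the falling factorial. -/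
set_option maxHeartbeats 1000000

namespace PR

/-- Out-degree of `u` in the digraph on vertex set `{1,…,n} ⊆ ℕ` with adjacency `E`. -/
def outDeg (n : ℕ) (E : ℕ → ℕ → Bool) (u : ℕ) : ℕ :=
  ((Finset.Icc 1 n).filter (fun v => E u v)).card

/-- In-degree of `u`. -/
def inDeg (n : ℕ) (E : ℕ → ℕ → Bool) (u : ℕ) : ℕ :=
  ((Finset.Icc 1 n).filter (fun v => E v u)).card

/-- `E` is a simple digraph on the vertex set `{1,…,n}`: all edges join distinct
vertices of `{1,…,n}` (no loops; the `Bool`-valued adjacency precludes multi-edges). -/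
def IsDigraph (n : ℕ) (E : ℕ → ℕ → Bool) : Prop :=
  ∀ u v, E u v = true → u ∈ Finset.Icc 1 n ∧ v ∈ Finset.Icc 1 n ∧ u ≠ v

/-- `WalkLen E k u v` : there is a directed walk of length `k` from `u` to `v`. -/
def WalkLen (E : ℕ → ℕ → Bool) : ℕ → ℕ → ℕ → Prop
  | 0, u, v => u = v
  | (k+1), u, v => ∃ w, E u w = true ∧ WalkLen E k w v

/-- Every vertex reaches every other vertex by a directed walk. -/
def StronglyConnected (n : ℕ) (E : ℕ → ℕ → Bool) : Prop :=
  ∀ u ∈ Finset.Icc 1 n, ∀ v ∈ Finset.Icc 1 n, ∃ k, WalkLen E k u v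

/-- Directed distance: number of edges in a shortest directed path from `u` to `v`. -/
noncomputable def dist (E : ℕ → ℕ → Bool) (u v : ℕ) : ℕ :=
  sInf {k | WalkLen E k u v}

/-- Distance between two sets of vertices. -/
noncomputable def setDist (E : ℕ → ℕ → Bool) (A B : Set ℕ) : ℕ :=
  sInf {k | ∃ a ∈ A, ∃ b ∈ B, dist E a b = k}

/-- `φ` is the Perron vector of the simple random walk on the digraph: a positive
probability distribution on `{1,…,n}` which is stationary, i.e. `φ P = φ` where
`P(u,v) = 1/d⁺(u)` for edges `(u,v)` and `0` otherwise. -/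
def IsPerron (n : ℕ) (E : ℕ → ℕ → Bool) (φ : ℕ → ℝ) : Prop :=
  (∀ v ∈ Finset.Icc 1 n, 0 < φ v) ∧
  (∑ v ∈ Finset.Icc 1 n, φ v = 1) ∧
  (∀ v ∈ Finset.Icc 1 n, φ v =
    ∑ u ∈ Finset.Icc 1 n, if E u v then φ u / (outDeg n E u : ℝ) else 0)

/-- The principal ratio `γ = (max_u φ(u)) / (min_u φ(u))` of a vector `φ` on `{1,…,n}`. -/
noncomputable def pratio (n : ℕ) (φ : ℕ → ℝ) : ℝ :=
  if h : (Finset.Icc 1 n).Nonempty then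
    ((Finset.Icc 1 n).sup' h φ) / ((Finset.Icc 1 n).inf' h φ)
  else 0

/-- Vertices attaining the maximum of `φ`. -/
def Vmax (n : ℕ) (φ : ℕ → ℝ) : Set ℕ :=
  {v | v ∈ Finset.Icc 1 n ∧ ∀ u ∈ Finset.Icc 1 n, φ u ≤ φ v}

/-- Vertices attaining the minimum of `φ`. -/
def Vmin (n : ℕ) (φ : ℕ → ℝ) : Set ℕ :=
  {v | v ∈ Finset.Icc 1 n ∧ ∀ u ∈ Finset.Icc 1 n, φ v ≤ φ u}

/-- Membership in the family `𝒟′_n` (together with the Perron vector `φ` of `D`). -/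
def memDn' (n : ℕ) (E : ℕ → ℕ → Bool) (φ : ℕ → ℝ) : Prop :=
  IsDigraph n E ∧ StronglyConnected n E ∧ IsPerron n E φ ∧
  -- (i) v_1, v_2, …, v_n is a shortest directed path from v_1 to v_n, of length n-1
  (∀ i, 1 ≤ i → i < n → E i (i+1) = true) ∧ dist E 1 n = n - 1 ∧
  -- (ii) d⁺(v_i) = i for every 2 ≤ i ≤ n-1
  (∀ i, 2 ≤ i → i ≤ n - 1 → outDeg n E i = i) ∧
  -- (iii) v_2 ∈ V_max, v_n ∈ V_min, dist(V_max,V_min) = dist(v_2,v_n) = n-2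
  (2:ℕ) ∈ Vmax n φ ∧ n ∈ Vmin n φ ∧
  setDist E (Vmax n φ) (Vmin n φ) = n - 2 ∧ dist E 2 n = n - 2 ∧
  -- (iv) d⁺(v_n) ≥ 2
  2 ≤ outDeg n E n ∧
  -- (v) N⁺(v_n) ≠ {v_1, v_2}
  ¬ (∀ v, E n v = true ↔ (v = 1 ∨ v = 2))

/-! ### Auxiliary lemmas -/

lemma descFactorial_pos' {n k : ℕ} (h : k ≤ n) : 0 < n.descFactorial k :=
  Nat.pos_of_ne_zero (fun h0 => absurd (Nat.descFactorial_eq_zero_iff_lt.mp h0) (by omega))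

lemma nat1 (t : ℕ) : ∀ m, m + 4 ≤ t →
    3 * ∑ j ∈ Finset.range (m+1), (t-1).descFactorial j ≤ 4 * (t-1).descFactorial m := by
  intro m
  induction m with
  | zero => intro _; simp
  | succ m ih =>
    intro hm
    rw [Finset.sum_range_succ, Nat.mul_add]
    have h1 : 3 * ∑ j ∈ Finset.range (m+1), (t-1).descFactorial j ≤ 4 * (t-1).descFactorial m :=
      ih (by omega)
    have h2 : (t-1).descFactorial (m+1) = (t-1-m) * (t-1).descFactorial m :=
      Nat.descFactorial_succ _ _
    have h3 : 4 ≤ t - 1 - m := by omega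
    calc 3 * ∑ j ∈ Finset.range (m+1), (t-1).descFactorial j + 3 * (t-1).descFactorial (m+1)
        ≤ 4 * (t-1).descFactorial m + 3 * (t-1).descFactorial (m+1) := by omega
      _ ≤ (t-1-m) * (t-1).descFactorial m + 3 * (t-1).descFactorial (m+1) := by
          have := Nat.mul_le_mul_right ((t-1).descFactorial m) h3; omega
      _ = 4 * (t-1).descFactorial (m+1) := by rw [h2]; ring

lemma nat2 {t : ℕ} (ht : 5 ≤ t) : ∀ j, 1 ≤ j → j ≤ t - 3 → 2^(j+1) ≤ (t-1).descFactorial j := by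
  intro j h1 h2
  induction j with
  | zero => omega
  | succ j ih =>
    rcases Nat.eq_or_lt_of_le h1 with h | h
    · simp [← h, Nat.descFactorial_one]; omega
    · have hj1 : 1 ≤ j := by omega
      have := ih hj1 (by omega)
      rw [Nat.descFactorial_succ]
      have h3 : 2 ≤ t - 1 - j := by omega
      calc 2^(j+1+1) = 2 * 2^(j+1) := by ring
        _ ≤ (t-1-j) * (t-1).descFactorial j := Nat.mul_le_mul h3 this

lemma geomsum : ∀ m : ℕ, ∑ j ∈ Finset.Icc 1 m, ((1:ℝ)/2)^(j+1) = 1/2 - (1/2)^(m+1) := by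
  intro m
  induction m with
  | zero => simp
  | succ m ih =>
    rw [Finset.sum_Icc_succ_top (by omega), ih]
    ring

lemma telesc {t : ℕ} (ht : 5 ≤ t) :
    ∀ m, m ≤ t - 2 →
    ∑ j ∈ Finset.Icc 1 m, (1:ℝ)/((t-j).descFactorial 2) = 1/((t-1-m : ℕ):ℝ) - 1/((t-1 : ℕ):ℝ) := by
  intro m
  induction m with
  | zero => simp
  | succ m ih =>
    intro hm
    rw [Finset.sum_Icc_succ_top (by omega), ih (by omega)]
    have hd2 : (t-(m+1)).descFactorial 2 = (t-m-2) * (t-m-1) := by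
      rw [show (2:ℕ) = 1 + 1 from rfl, Nat.descFactorial_succ, Nat.descFactorial_one]
      have e1 : t - (m+1) - 1 = t - m - 2 := by omega
      have e2 : t - (m+1) = t - m - 1 := by omega
      rw [e1, e2]
    rw [hd2]
    have e1 : t - 1 - m = t - m - 1 := by omega
    have e2 : t - 1 - (m+1) = t - m - 2 := by omega
    rw [e1, e2]
    have p1 : (0:ℝ) < ((t-m-1 : ℕ):ℝ) := by
      have : 1 ≤ t - m - 1 := by omega
      exact_mod_cast Nat.lt_of_lt_of_le Nat.zero_lt_one this
    have p2 : (0:ℝ) < ((t-m-2 : ℕ):ℝ) := by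
      have : 1 ≤ t - m - 2 := by omega
      exact_mod_cast Nat.lt_of_lt_of_le Nat.zero_lt_one this
    have hcast : (((t-m-2) * (t-m-1) : ℕ):ℝ) = ((t-m-2:ℕ):ℝ) * ((t-m-1:ℕ):ℝ) := by push_cast; ring
    have hrel : ((t-m-1:ℕ):ℝ) = ((t-m-2:ℕ):ℝ) + 1 := by
      have e3 : t - m - 1 = (t - m - 2) + 1 := by omega
      rw [e3]; push_cast; ring
    rw [hcast, hrel]
    field_simp
    ring

noncomputable def LLf (t : ℕ) (dR : ℝ) (k : ℕ) : ℝ :=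
  (1/dR) * (1 - 4/3 * ∑ j ∈ Finset.Icc 1 (k-2), 1/((t-j).descFactorial 2 : ℝ)
    - (1/(dR-1)) * ∑ j ∈ Finset.Icc 1 (k-1), 1/((t-1).descFactorial j : ℝ))

noncomputable def NNf (t k : ℕ) : ℝ := ∑ j ∈ Finset.range k, ((t-1).descFactorial j : ℝ)

lemma Lpos {t k : ℕ} {dR : ℝ} (ht : 5 ≤ t) (hd : 2 ≤ dR) (hk1 : 1 ≤ k) (hk2 : k ≤ t - 2) :
    0 < LLf t dR k := by
  unfold LLf
  have hS1 : ∑ j ∈ Finset.Icc 1 (k-2), 1 / ((t-j).descFactorial 2 : ℝ) ≤ 1/3 := by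
    rw [telesc ht (k-2) (by omega)]
    have h3 : (3:ℝ) ≤ ((t-1-(k-2) : ℕ):ℝ) := by
      have : 3 ≤ t - 1 - (k-2) := by omega
      exact_mod_cast this
    have hp : (0:ℝ) < ((t-1-(k-2) : ℕ):ℝ) := by linarith
    have h1 : 1/((t-1-(k-2) : ℕ):ℝ) ≤ 1/3 := by
      apply one_div_le_one_div_of_le <;> linarith
    have h2 : (0:ℝ) ≤ 1/((t-1:ℕ):ℝ) := by positivity
    linarith
  have hS2 : ∑ j ∈ Finset.Icc 1 (k-1), 1 / ((t-1).descFactorial j : ℝ) ≤ 1/2 := by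
    have hle : ∑ j ∈ Finset.Icc 1 (k-1), 1 / ((t-1).descFactorial j : ℝ)
        ≤ ∑ j ∈ Finset.Icc 1 (k-1), ((1:ℝ)/2)^(j+1) := by
      apply Finset.sum_le_sum
      intro j hj
      rw [Finset.mem_Icc] at hj
      have hj3 : j ≤ t - 3 := by omega
      have hnn := nat2 ht j hj.1 hj3
      have hp : (0:ℝ) < ((2:ℕ)^(j+1) : ℝ) := by positivity
      have hcast : ((2:ℕ)^(j+1) : ℝ) ≤ (((t-1).descFactorial j : ℕ) : ℝ) := by exact_mod_cast hnn
      have hd1 : 1 / (((t-1).descFactorial j : ℕ) : ℝ) ≤ 1 / ((2:ℕ)^(j+1) : ℝ) :=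
        one_div_le_one_div_of_le hp hcast
      calc 1 / (((t-1).descFactorial j : ℕ) : ℝ) ≤ 1 / ((2:ℕ)^(j+1) : ℝ) := hd1
        _ = ((1:ℝ)/2)^(j+1) := by push_cast; rw [div_pow]; norm_num
    rw [geomsum (k-1)] at hle
    have : (0:ℝ) ≤ (1/2:ℝ)^(k-1+1) := by positivity
    linarith
  have hS2' : (0:ℝ) ≤ ∑ j ∈ Finset.Icc 1 (k-1), 1 / ((t-1).descFactorial j : ℝ) := by
    apply Finset.sum_nonneg; intro j _; positivity
  have hd1 : (0:ℝ) < dR - 1 := by linarith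
  have hfrac : 1/(dR - 1) ≤ 1 := by rw [div_le_one hd1]; linarith
  have key : (1:ℝ)/18 ≤ 1 - 4/3 * ∑ j ∈ Finset.Icc 1 (k-2), 1 / ((t-j).descFactorial 2 : ℝ)
         - (1 / (dR - 1)) * ∑ j ∈ Finset.Icc 1 (k-1), 1 / ((t-1).descFactorial j : ℝ) := by
    have h1 : (1 / (dR - 1)) * ∑ j ∈ Finset.Icc 1 (k-1), 1 / ((t-1).descFactorial j : ℝ) ≤ 1/2 := by
      calc (1 / (dR - 1)) * ∑ j ∈ Finset.Icc 1 (k-1), 1 / ((t-1).descFactorial j : ℝ)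
          ≤ 1 * ∑ j ∈ Finset.Icc 1 (k-1), 1 / ((t-1).descFactorial j : ℝ) :=
            mul_le_mul_of_nonneg_right hfrac hS2'
        _ ≤ 1/2 := by rw [one_mul]; exact hS2
    linarith
  have hdpos : (0:ℝ) < 1/dR := by positivity
  nlinarith [key, hdpos]

lemma walkLen_trans {E : ℕ → ℕ → Bool} :
    ∀ {p q a b c}, WalkLen E p a b → WalkLen E q b c → WalkLen E (p+q) a c := by
  intro p
  induction p with
  | zero => intro q a b c h hq; have hab : a = b := h; rw [Nat.zero_add]; exact hab ▸ hq
  | succ p ih =>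
    intro q a b c h hq
    obtain ⟨w, hw, hwalk⟩ := h
    have he : p + 1 + q = (p + q) + 1 := by omega
    rw [he]
    exact ⟨w, hw, ih hwalk hq⟩

lemma walkLen_path {E : ℕ → ℕ → Bool} {n : ℕ}
    (hpath : ∀ i, 1 ≤ i → i < n → E i (i+1) = true) :
    ∀ m a, 1 ≤ a → a + m ≤ n → WalkLen E m a (a+m) := by
  intro m
  induction m with
  | zero => intro a _ _; rfl
  | succ m ih =>
    intro a ha hm
    refine ⟨a+1, hpath a ha (by omega), ?_⟩
    have h := ih (a+1) (by omega) (by omega)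
    have he : a + 1 + m = a + (m+1) := by omega
    rwa [he] at h

section GraphFacts
variable {n : ℕ} {E : ℕ → ℕ → Bool}

lemma noshort (hdig : IsDigraph n E) (hpath : ∀ i, 1 ≤ i → i < n → E i (i+1) = true)
    (hdist : dist E 1 n = n - 1) (hn : 6 ≤ n) :
    ∀ i j, 1 ≤ i → i < n → E i j = true → j ≤ i + 1 := by
  intro i j hi hin hij
  by_contra hcon
  push_neg at hcon
  have hj := (hdig i j hij).2.1
  rw [Finset.mem_Icc] at hj
  have w1 : WalkLen E (i-1) 1 i := by
    have h := walkLen_path hpath (i-1) 1 (le_refl 1) (by omega)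
    have he : 1 + (i-1) = i := by omega
    rwa [he] at h
  have w2 : WalkLen E (n-j) j n := by
    have h := walkLen_path hpath (n-j) j hj.1 (by omega)
    have he : j + (n-j) = n := by omega
    rwa [he] at h
  have w3 : WalkLen E ((n-j)+1) i n := ⟨j, hij, w2⟩
  have w4 : WalkLen E ((i-1) + ((n-j)+1)) 1 n := walkLen_trans w1 w3
  have hle : dist E 1 n ≤ (i-1) + ((n-j)+1) := Nat.sInf_le w4
  rw [hdist] at hle
  omega

lemma loopfree (hdig : IsDigraph n E) : ∀ i, E i i = false := by
  intro i
  cases h : E i i with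
  | false => rfl
  | true => exact absurd rfl (hdig i i h).2.2

lemma echar (hdig : IsDigraph n E) (hpath : ∀ i, 1 ≤ i → i < n → E i (i+1) = true)
    (hdist : dist E 1 n = n - 1) (hn : 6 ≤ n)
    (hdeg : ∀ i, 2 ≤ i → i ≤ n - 1 → outDeg n E i = i) :
    ∀ i, 2 ≤ i → i ≤ n - 1 → ∀ j, (E i j = true ↔ (1 ≤ j ∧ j ≤ i + 1 ∧ j ≠ i)) := by
  intro i h2 hi1
  have hset : (Finset.Icc 1 n).filter (fun j => E i j) = (Finset.Icc 1 (i+1)).erase i := by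
    apply Finset.eq_of_subset_of_card_le
    · intro j hj
      rw [Finset.mem_filter] at hj
      obtain ⟨hj1, hj2⟩ := hj
      rw [Finset.mem_Icc] at hj1
      have hle : j ≤ i + 1 := noshort hdig hpath hdist hn i j (by omega) (by omega) hj2
      have hne : j ≠ i := Ne.symm (hdig i j hj2).2.2
      rw [Finset.mem_erase, Finset.mem_Icc]
      exact ⟨hne, hj1.1, hle⟩
    · have hc1 : ((Finset.Icc 1 n).filter (fun j => E i j)).card = i := hdeg i h2 hi1
      have hc2 : ((Finset.Icc 1 (i+1)).erase i).card = i := by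
        rw [Finset.card_erase_of_mem (by rw [Finset.mem_Icc]; omega), Nat.card_Icc]
        omega
      omega
  intro j
  constructor
  · intro hij
    have hj := (hdig i j hij).2.1
    have hmem : j ∈ (Finset.Icc 1 n).filter (fun j => E i j) := by
      rw [Finset.mem_filter]; exact ⟨hj, hij⟩
    rw [hset, Finset.mem_erase, Finset.mem_Icc] at hmem
    exact ⟨hmem.2.1, hmem.2.2, hmem.1⟩
  · intro ⟨h1, h2', h3⟩
    have hmem : j ∈ (Finset.Icc 1 (i+1)).erase i := by
      rw [Finset.mem_erase, Finset.mem_Icc]; exact ⟨h3, h1, h2'⟩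
    rw [← hset, Finset.mem_filter] at hmem
    exact hmem.2

lemma e1char (hdig : IsDigraph n E) (hpath : ∀ i, 1 ≤ i → i < n → E i (i+1) = true)
    (hdist : dist E 1 n = n - 1) (hn : 6 ≤ n) :
    ∀ j, (E 1 j = true ↔ j = 2) := by
  intro j
  constructor
  · intro h
    have hj := (hdig 1 j h).2.1
    rw [Finset.mem_Icc] at hj
    have h1 := noshort hdig hpath hdist hn 1 j (le_refl 1) (by omega) h
    have hne := (hdig 1 j h).2.2
    omega
  · intro h; subst h; exact hpath 1 (le_refl 1) (by omega)

lemma stat_eq (hn : 6 ≤ n)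
    (hec : ∀ i, 2 ≤ i → i ≤ n - 1 → ∀ j, (E i j = true ↔ (1 ≤ j ∧ j ≤ i + 1 ∧ j ≠ i)))
    (he1 : ∀ j, (E 1 j = true ↔ j = 2))
    (B : ℕ → ℕ → Bool) (μ : ℕ → ℝ)
    (hBE : ∀ u v, u ≠ n → B u v = E u v) (hBnn : B n n = false)
    (hper : IsPerron n B μ)
    (hdegB : ∀ u, 2 ≤ u → u ≤ n - 1 → outDeg n B u = u) :
    (∀ v, 3 ≤ v → v ≤ n - 1 →
      μ v = μ (v-1) / ((v-1 : ℕ):ℝ) + (∑ u ∈ Finset.Icc (v+1) (n-1), μ u / (u:ℝ)) +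
        (if B n v then μ n / ((outDeg n B n):ℝ) else 0))
    ∧ (μ n = μ (n-1) / ((n-1 : ℕ):ℝ)) := by
  have hsplit : Finset.Icc 1 n = insert n (Finset.Icc 1 (n-1)) := by
    ext a; rw [Finset.mem_insert, Finset.mem_Icc, Finset.mem_Icc]; omega
  have hnot : n ∉ Finset.Icc 1 (n-1) := by rw [Finset.mem_Icc]; omega
  constructor
  · intro v hv3 hvn
    have h := hper.2.2 v (by rw [Finset.mem_Icc]; omega)
    rw [hsplit, Finset.sum_insert hnot] at h
    have hfil : ∑ u ∈ Finset.Icc 1 (n-1), (if B u v then μ u / ((outDeg n B u):ℝ) else 0)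
        = ∑ u ∈ insert (v-1) (Finset.Icc (v+1) (n-1)), μ u / ((outDeg n B u):ℝ) := by
      rw [← Finset.sum_filter]
      congr 1
      ext a
      rw [Finset.mem_filter, Finset.mem_Icc, Finset.mem_insert, Finset.mem_Icc]
      constructor
      · rintro ⟨⟨ha1, ha2⟩, hB⟩
        rw [hBE a v (by omega)] at hB
        rcases Nat.lt_or_ge a 2 with h2 | h2
        · have ha : a = 1 := by omega
          subst ha
          rw [he1 v] at hB
          omega
        · rw [hec a h2 (by omega) v] at hB
          omega
      · intro h'
        have ha2 : 2 ≤ a ∧ a ≤ n - 1 := by rcases h' with h' | h' <;> omega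
        refine ⟨⟨by omega, ha2.2⟩, ?_⟩
        rw [hBE a v (by omega), hec a ha2.1 ha2.2 v]
        omega
    rw [hfil, Finset.sum_insert (by rw [Finset.mem_Icc]; omega)] at h
    rw [hdegB (v-1) (by omega) (by omega)] at h
    have hcong : ∑ u ∈ Finset.Icc (v+1) (n-1), μ u / ((outDeg n B u):ℝ)
        = ∑ u ∈ Finset.Icc (v+1) (n-1), μ u / (u:ℝ) := by
      apply Finset.sum_congr rfl
      intro u hu
      rw [Finset.mem_Icc] at hu
      rw [hdegB u (by omega) hu.2]
    rw [hcong] at h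
    rw [h]; ring
  · have h := hper.2.2 n (by rw [Finset.mem_Icc]; omega)
    rw [hsplit, Finset.sum_insert hnot] at h
    rw [hBnn] at h
    have hfil : ∑ u ∈ Finset.Icc 1 (n-1), (if B u n then μ u / ((outDeg n B u):ℝ) else 0)
        = ∑ u ∈ ({n-1} : Finset ℕ), μ u / ((outDeg n B u):ℝ) := by
      rw [← Finset.sum_filter]
      congr 1
      ext a
      rw [Finset.mem_filter, Finset.mem_Icc, Finset.mem_singleton]
      constructor
      · rintro ⟨⟨ha1, ha2⟩, hB⟩
        rw [hBE a n (by omega)] at hB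
        rcases Nat.lt_or_ge a 2 with h2 | h2
        · have ha : a = 1 := by omega
          subst ha
          rw [he1 n] at hB
          omega
        · rw [hec a h2 (by omega) n] at hB
          omega
      · intro h'
        subst h'
        refine ⟨⟨by omega, le_refl _⟩, ?_⟩
        rw [hBE (n-1) n (by omega), hec (n-1) (by omega) (le_refl _) n]
        omega
    rw [hfil, Finset.sum_singleton, hdegB (n-1) (by omega) (le_refl _)] at h
    simpa using h

end GraphFacts

lemma abstract_main {t : ℕ} {dR aR : ℝ} (ht : 5 ≤ t) (hdR : 2 ≤ dR)
    (haR : aR = 1/(dR-1) - 1/dR)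
    (Q T c : ℕ → ℝ) (hc : ∀ k, 0 ≤ c k ∧ c k ≤ aR)
    (hQ1 : Q 1 = 1/dR) (hT1 : T 1 = 0)
    (hrecQ : ∀ k, 1 ≤ k → k ≤ t-3 → Q (k+1) = Q k - (T k + c k)/((t-1).descFactorial k : ℝ))
    (hrecT : ∀ k, 1 ≤ k → k ≤ t-3 → T (k+1) = T k + Q k * ((t-1).descFactorial (k-1) : ℝ)) :
    ∀ k, 1 ≤ k → k ≤ t-2 →
      (LLf t dR k ≤ Q k ∧ Q k ≤ 1/dR ∧ 0 ≤ T k ∧ T k ≤ (1/dR) * NNf t (k-1)) := by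
  have hdR0 : (0:ℝ) < dR := by linarith
  have hdR1 : (0:ℝ) < dR - 1 := by linarith
  have haR' : aR = (1/dR) * (1/(dR-1)) := by rw [haR]; field_simp; ring
  have haR0 : (0:ℝ) ≤ aR := by rw [haR']; positivity
  have hFDpos : ∀ m : ℕ, m ≤ t-1 → (0:ℝ) < ((t-1).descFactorial m : ℝ) := by
    intro m hm; exact_mod_cast descFactorial_pos' hm
  intro k hk1
  induction k, hk1 using Nat.le_induction with
  | base =>
    intro _
    have hL1 : LLf t dR 1 = 1/dR := by unfold LLf; norm_num
    have hN0 : NNf t 0 = 0 := by unfold NNf; simp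
    refine ⟨le_of_eq (by rw [hL1, hQ1]), le_of_eq hQ1, le_of_eq hT1.symm, ?_⟩
    rw [hT1]
    have e : (1:ℕ) - 1 = 0 := rfl
    rw [e, hN0]
    simp
  | succ k hk1 ih =>
    intro hk2
    have hkt3 : k ≤ t - 3 := by omega
    obtain ⟨ihL, ihU, ihT0, ihTU⟩ := ih (by omega)
    have hQk_pos : 0 < Q k := lt_of_lt_of_le (Lpos ht hdR hk1 (by omega)) ihL
    have hFk := hFDpos k (by omega)
    have hFkm := hFDpos (k-1) (by omega)
    have hc0 := (hc k).1
    have hcA := (hc k).2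
    have hQrec := hrecQ k hk1 hkt3
    have hTrec := hrecT k hk1 hkt3
    have hQU : Q (k+1) ≤ 1/dR := by
      rw [hQrec]
      have : 0 ≤ (T k + c k)/((t-1).descFactorial k : ℝ) := by
        apply div_nonneg (by linarith) (le_of_lt hFk)
      linarith
    have hNsucc : NNf t k = NNf t (k-1) + ((t-1).descFactorial (k-1) : ℝ) := by
      obtain ⟨m0, rfl⟩ : ∃ m0, k = m0 + 1 := ⟨k-1, by omega⟩
      simp only [Nat.add_sub_cancel]
      unfold NNf
      rw [Finset.sum_range_succ]
    have hT0' : 0 ≤ T (k+1) := by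
      rw [hTrec]
      have : 0 ≤ Q k * ((t-1).descFactorial (k-1) : ℝ) := by positivity
      linarith
    have hTU' : T (k+1) ≤ (1/dR) * NNf t ((k+1)-1) := by
      have e : (k+1)-1 = k := by omega
      rw [e, hTrec, hNsucc]
      have h5 : Q k * ((t-1).descFactorial (k-1) : ℝ) ≤ (1/dR) * ((t-1).descFactorial (k-1) : ℝ) :=
        mul_le_mul_of_nonneg_right ihU (le_of_lt hFkm)
      nlinarith [h5, ihTU]
    -- lower bound
    have step1 : Q k - ((1/dR) * NNf t (k-1) + aR)/((t-1).descFactorial k : ℝ) ≤ Q (k+1) := by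
      rw [hQrec]
      have h1 : T k + c k ≤ (1/dR) * NNf t (k-1) + aR := by linarith
      have h2 : (T k + c k)/((t-1).descFactorial k : ℝ)
          ≤ ((1/dR) * NNf t (k-1) + aR)/((t-1).descFactorial k : ℝ) := by gcongr
      linarith
    have hS2diff : ∑ j ∈ Finset.Icc 1 ((k+1)-1), 1/((t-1).descFactorial j : ℝ)
        = (∑ j ∈ Finset.Icc 1 (k-1), 1/((t-1).descFactorial j : ℝ))
          + 1/((t-1).descFactorial k : ℝ) := by
      obtain ⟨m0, rfl⟩ : ∃ m0, k = m0 + 1 := ⟨k-1, by omega⟩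
      simp only [Nat.add_sub_cancel]
      rw [Finset.sum_Icc_succ_top (by omega)]
    have hkey : (1/dR) * NNf t (k-1) / ((t-1).descFactorial k : ℝ)
        ≤ (1/dR) * (4/3) *
          ((∑ j ∈ Finset.Icc 1 ((k+1)-2), 1/((t-j).descFactorial 2 : ℝ))
            - ∑ j ∈ Finset.Icc 1 (k-2), 1/((t-j).descFactorial 2 : ℝ)) := by
      rcases Nat.lt_or_ge k 2 with hk | hk
      · have e : k = 1 := by omega
        subst e
        have hN0 : NNf t 0 = 0 := by unfold NNf; simp
        norm_num [hN0]
      · obtain ⟨m, rfl⟩ : ∃ m, k = m + 2 := ⟨k-2, by omega⟩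
        have e1 : m+2+1-2 = m+1 := by omega
        have e2 : m+2-2 = m := by omega
        have e3 : m+2-1 = m+1 := by omega
        rw [e1, e2, e3]
        rw [Finset.sum_Icc_succ_top (by omega : 1 ≤ m+1)]
        have hsimp : ∑ j ∈ Finset.Icc 1 m, 1/((t-j).descFactorial 2 : ℝ)
            + 1/((t-(m+1)).descFactorial 2 : ℝ)
            - ∑ j ∈ Finset.Icc 1 m, 1/((t-j).descFactorial 2 : ℝ)
            = 1/((t-(m+1)).descFactorial 2 : ℝ) := by ring
        rw [hsimp]
        obtain ⟨p, rfl⟩ : ∃ p, t = (m+2)+p := ⟨t-(m+2), by omega⟩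
        have hp3 : 3 ≤ p := by omega
        have hD2nat : ((m+2)+p-(m+1)).descFactorial 2 = p*(p+1) := by
          have e4 : (m+2)+p-(m+1) = p+1 := by omega
          rw [e4, show (2:ℕ) = 1+1 from rfl, Nat.descFactorial_succ, Nat.descFactorial_one]
          simp
        have hFnat : ((m+2)+p-1).descFactorial (m+2) = p*((p+1)*((m+2)+p-1).descFactorial m) := by
          rw [Nat.descFactorial_succ, Nat.descFactorial_succ]
          have e5 : (m+2)+p-1-(m+1) = p := by omega
          have e6 : (m+2)+p-1-m = p+1 := by omega
          rw [e5, e6]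
        have hnat := nat1 ((m+2)+p) m (by omega)
        have hNN43 : NNf ((m+2)+p) (m+1) ≤ (4/3) * (((m+2)+p-1).descFactorial m : ℝ) := by
          have hNN : NNf ((m+2)+p) (m+1)
              = ((∑ j ∈ Finset.range (m+1), ((m+2)+p-1).descFactorial j : ℕ) : ℝ) := by
            unfold NNf; push_cast; ring
          rw [hNN]
          have h3 : ((3:ℝ)) * ((∑ j ∈ Finset.range (m+1), ((m+2)+p-1).descFactorial j : ℕ) : ℝ)
              ≤ 4 * (((m+2)+p-1).descFactorial m : ℝ) := by exact_mod_cast hnat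
          linarith
        have hPpos : (0:ℝ) < (p:ℝ) := by exact_mod_cast (by omega : 0 < p)
        have hD2cast : ((((m+2)+p-(m+1)).descFactorial 2 : ℕ) : ℝ) = (p:ℝ)*((p:ℝ)+1) := by
          rw [hD2nat]; push_cast; ring
        have hFcast : ((((m+2)+p-1).descFactorial (m+2) : ℕ) : ℝ)
            = (p:ℝ)*((p:ℝ)+1)*(((m+2)+p-1).descFactorial m : ℝ) := by
          rw [hFnat]; push_cast; ring
        rw [hD2cast, div_le_iff₀ hFk]
        rw [hFcast]
        have hfin : (1/dR) * NNf ((m+2)+p) (m+1)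
            ≤ (1/dR)*(4/3) * (((m+2)+p-1).descFactorial m : ℝ) := by
          have hpos : (0:ℝ) < 1/dR := by positivity
          nlinarith [hNN43]
        have hiden : (1/dR)*(4/3) * (1/((p:ℝ)*((p:ℝ)+1)))
            * ((p:ℝ)*((p:ℝ)+1)*(((m+2)+p-1).descFactorial m : ℝ))
            = (1/dR)*(4/3) * (((m+2)+p-1).descFactorial m : ℝ) := by
          field_simp
        rw [hiden]
        exact hfin
    have hLLsucc : LLf t dR (k+1) = LLf t dR k
        - (1/dR)*(4/3)*((∑ j ∈ Finset.Icc 1 ((k+1)-2), 1/((t-j).descFactorial 2 : ℝ))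
            - ∑ j ∈ Finset.Icc 1 (k-2), 1/((t-j).descFactorial 2 : ℝ))
        - (1/dR)*(1/(dR-1))*(1/((t-1).descFactorial k : ℝ)) := by
      unfold LLf
      rw [hS2diff]
      ring
    have haRF : aR / ((t-1).descFactorial k : ℝ)
        = (1/dR)*(1/(dR-1))*(1/((t-1).descFactorial k : ℝ)) := by
      rw [haR']; ring
    have hadd : ((1/dR) * NNf t (k-1) + aR)/((t-1).descFactorial k : ℝ)
        = (1/dR) * NNf t (k-1)/((t-1).descFactorial k : ℝ)
          + aR/((t-1).descFactorial k : ℝ) := add_div _ _ _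
    have hQL : LLf t dR (k+1) ≤ Q (k+1) := by
      rw [hLLsucc]
      rw [hadd, haRF] at step1
      linarith [hkey, step1, ihL]
    exact ⟨hQL, hQU, hT0', hTU'⟩


/-- Proposition 11 (d),(e): for `t ≥ 5` and `3 ≤ k ≤ t-2`, bounds on
`(g_{t-k} - f_{t-k}) / (t-1)_k` for `D ∈ 𝒟′_n` and `D⁻ = D - (v_n,v_t)`. -/
theorem stmt12 (n t : ℕ) (E : ℕ → ℕ → Bool) (φ ψ : ℕ → ℝ)
    (hD : memDn' n E φ) (ht5 : 5 ≤ t)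
    (ht3 : 3 ≤ t) (htn : t ≤ n - 1) (hedge : E n t = true)
    (htmax : ∀ t', t < t' → t' ≤ n - 1 → E n t' = false)
    (hψ : IsPerron n (fun u v => E u v && !(u == n && v == t)) ψ) :
    ∀ k, 3 ≤ k → k ≤ t - 2 →
      -- (d)
      ((ψ (t-k) / ψ n - φ (t-k) / φ n) / ((t-1).descFactorial k : ℝ) ≥
        (1 / (outDeg n E n : ℝ)) *
          (1 - 4/3 * ∑ j ∈ Finset.Icc 1 (k-2), 1 / ((t-j).descFactorial 2 : ℝ)
             - (1 / ((outDeg n E n : ℝ) - 1)) *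
                ∑ j ∈ Finset.Icc 1 (k-1), 1 / ((t-1).descFactorial j : ℝ))) ∧
      (0 < (1 / (outDeg n E n : ℝ)) *
          (1 - 4/3 * ∑ j ∈ Finset.Icc 1 (k-2), 1 / ((t-j).descFactorial 2 : ℝ)
             - (1 / ((outDeg n E n : ℝ) - 1)) *
                ∑ j ∈ Finset.Icc 1 (k-1), 1 / ((t-1).descFactorial j : ℝ))) ∧
      -- (e)
      ((ψ (t-k) / ψ n - φ (t-k) / φ n) / ((t-1).descFactorial k : ℝ) ≤
        1 / (outDeg n E n : ℝ)) := by
  obtain ⟨hdig, -, hper, hpath, hdist1, hdeg, -, -, -, -, hdn2, -⟩ := hD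
  have hn : 6 ≤ n := by omega
  have hec := echar hdig hpath hdist1 hn hdeg
  have he1 := e1char hdig hpath hdist1 hn
  have hloop := loopfree hdig
  set d : ℕ := outDeg n E n with hd
  have hdR2 : (2:ℝ) ≤ (d:ℝ) := by exact_mod_cast hdn2
  have hdR0 : (0:ℝ) < (d:ℝ) := by linarith
  have hdR1 : (0:ℝ) < (d:ℝ) - 1 := by linarith
  -- facts about the modified adjacency
  have hBne : ∀ u v : ℕ, u ≠ n → (E u v && !(u == n && v == t)) = E u v := by
    intro u v h
    have h1 : (u == n) = false := by simp [h]
    rw [h1]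
    simp
  have hBn : ∀ v : ℕ, v ≠ t → (E n v && !(n == n && v == t)) = E n v := by
    intro v h
    have h2 : (v == t) = false := by simp [h]
    rw [h2]
    simp
  have hBnt : (E n t && !(n == n && t == t)) = false := by simp
  have hBnn : (E n n && !(n == n && n == t)) = false := by simp [hloop n]
  have hdegB : ∀ u, 2 ≤ u → u ≤ n - 1 →
      outDeg n (fun u v => E u v && !(u == n && v == t)) u = u := by
    intro u h1 h2
    have heq : outDeg n (fun u v => E u v && !(u == n && v == t)) u = outDeg n E u := by
      unfold outDeg
      congr 1
      apply Finset.filter_congr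
      intro v _
      simp only [hBne u v (by omega)]
    rw [heq]
    exact hdeg u h1 h2
  have hdegBn : outDeg n (fun u v => E u v && !(u == n && v == t)) n = d - 1 := by
    unfold outDeg
    have hset : (Finset.Icc 1 n).filter (fun v => (E n v && !(n == n && v == t)) = true)
        = ((Finset.Icc 1 n).filter (fun v => E n v = true)).erase t := by
      ext a
      rw [Finset.mem_erase, Finset.mem_filter, Finset.mem_filter]
      constructor
      · intro ⟨hmem, hB⟩
        by_cases hat : a = t
        · subst hat; rw [hBnt] at hB; exact absurd hB (by simp)
        · rw [hBn a hat] at hB; exact ⟨hat, hmem, hB⟩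
      · intro ⟨hat, hmem, hB⟩
        rw [← hBn a hat] at hB
        exact ⟨hmem, hB⟩
    rw [hd]
    unfold outDeg
    rw [hset, Finset.card_erase_of_mem]
    rw [Finset.mem_filter, Finset.mem_Icc]
    exact ⟨⟨by omega, by omega⟩, hedge⟩
  have hcastd : ((outDeg n (fun u v => E u v && !(u == n && v == t)) n : ℕ) : ℝ)
      = (d:ℝ) - 1 := by
    rw [hdegBn]
    have : (1:ℕ) ≤ d := by omega
    push_cast [this]
    ring
  -- stationarity equations
  obtain ⟨hstatφ, hstatφn⟩ := stat_eq hn hec he1 E φ (fun _ _ _ => rfl) (hloop n) hper hdeg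
  obtain ⟨hstatψ, hstatψn⟩ := stat_eq hn hec he1 _ ψ hBne hBnn hψ hdegB
  have hφn : 0 < φ n := hper.1 n (by rw [Finset.mem_Icc]; omega)
  have hψn : 0 < ψ n := hψ.1 n (by rw [Finset.mem_Icc]; omega)
  have hφpos : ∀ v, 1 ≤ v → v ≤ n → 0 < φ v := by
    intro v h1 h2; exact hper.1 v (by rw [Finset.mem_Icc]; omega)
  have hψpos : ∀ v, 1 ≤ v → v ≤ n → 0 < ψ v := by
    intro v h1 h2; exact hψ.1 v (by rw [Finset.mem_Icc]; omega)
  -- normalized equations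
  have eqf : ∀ v, 3 ≤ v → v ≤ n-1 → φ v / φ n =
      (φ (v-1) / φ n)/((v-1:ℕ):ℝ) + (∑ u ∈ Finset.Icc (v+1) (n-1), (φ u / φ n)/(u:ℝ))
      + (if E n v then 1/(d:ℝ) else 0) := by
    intro v h3 hv
    rw [hstatφ v h3 hv]
    rw [add_div, add_div]
    congr 1
    · congr 1
      · rw [div_right_comm]
      · rw [Finset.sum_div]; exact Finset.sum_congr rfl (fun u _ => div_right_comm _ _ _)
    · by_cases hEnv : E n v = true
      · rw [if_pos hEnv, if_pos hEnv, ← hd, div_right_comm, div_self (ne_of_gt hφn)]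
      · rw [if_neg hEnv, if_neg hEnv, zero_div]
  have eqg : ∀ v, 3 ≤ v → v ≤ n-1 → ψ v / ψ n =
      (ψ (v-1) / ψ n)/((v-1:ℕ):ℝ) + (∑ u ∈ Finset.Icc (v+1) (n-1), (ψ u / ψ n)/(u:ℝ))
      + (if (E n v && !(n == n && v == t)) then 1/((d:ℝ)-1) else 0) := by
    intro v h3 hv
    rw [hstatψ v h3 hv]
    rw [add_div, add_div]
    congr 1
    · congr 1
      · rw [div_right_comm]
      · rw [Finset.sum_div]; exact Finset.sum_congr rfl (fun u _ => div_right_comm _ _ _)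
    · by_cases hEnv : (E n v && !(n == n && v == t)) = true
      · rw [if_pos hEnv, if_pos hEnv, hcastd, div_right_comm, div_self (ne_of_gt hψn)]
      · rw [if_neg hEnv, if_neg hEnv, zero_div]
  -- ψ/ψn = φ/φn above t
  have hzero : ∀ j : ℕ, ∀ u, n-1-j ≤ u → t ≤ u → u ≤ n-1 → ψ u / ψ n = φ u / φ n := by
    intro j
    induction j with
    | zero =>
      intro u h1 h2 h3
      have hu : u = n-1 := by omega
      subst hu
      have hn1pos : (0:ℝ) < ((n-1:ℕ):ℝ) := by
        have : 1 ≤ n - 1 := by omega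
        exact_mod_cast Nat.lt_of_lt_of_le Nat.zero_lt_one this
      have hφn1 : 0 < φ (n-1) := hφpos (n-1) (by omega) (by omega)
      have hψn1 : 0 < ψ (n-1) := hψpos (n-1) (by omega) (by omega)
      have hf : φ (n-1) / φ n = ((n-1:ℕ):ℝ) := by
        rw [hstatφn]
        field_simp
      have hg : ψ (n-1) / ψ n = ((n-1:ℕ):ℝ) := by
        rw [hstatψn]
        field_simp
      rw [hf, hg]
    | succ j ih =>
      intro u h1 h2 h3
      rcases Nat.lt_or_ge u (n-1-j) with hlt | hge
      swap
      · exact ih u hge h2 h3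
      · have hu1 : u + 1 ≤ n - 1 := by omega
        have h31 : 3 ≤ u + 1 := by omega
        have hu0 : ((u:ℕ):ℝ) ≠ 0 := by
          have : (0:ℕ) < u := by omega
          exact_mod_cast Nat.pos_iff_ne_zero.mp this
        have henf : E n (u+1) = false := htmax (u+1) (by omega) hu1
        have hf := eqf (u+1) h31 hu1
        have hg := eqg (u+1) h31 hu1
        rw [henf] at hf
        simp only [Bool.false_and, Bool.false_eq_true, if_false] at hf hg
        rw [henf] at hg
        simp only [Bool.false_and, Bool.false_eq_true, if_false] at hg
        simp only [Nat.add_sub_cancel] at hf hg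
        have hsum : ∑ w ∈ Finset.Icc (u+1+1) (n-1), (ψ w / ψ n)/(w:ℝ)
            = ∑ w ∈ Finset.Icc (u+1+1) (n-1), (φ w / φ n)/(w:ℝ) := by
          apply Finset.sum_congr rfl
          intro w hw
          rw [Finset.mem_Icc] at hw
          rw [ih w (by omega) (by omega) hw.2]
        have huu : ψ (u+1) / ψ n = φ (u+1) / φ n := ih (u+1) (by omega) (by omega) hu1
        have hdd : (ψ u / ψ n)/(u:ℝ) = (φ u / φ n)/(u:ℝ) := by
          rw [huu, hsum] at hg
          linarith [hf, hg]
        have hfin := congrArg (fun z : ℝ => z * (u:ℝ)) hdd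
        simpa [div_mul_cancel₀ _ hu0] using hfin
  have hzeroU : ∀ u, t ≤ u → u ≤ n-1 → ψ u / ψ n = φ u / φ n := by
    intro u h1 h2
    exact hzero (n-1) u (by omega) h1 h2
  -- value at t-1
  have ht1pos : (0:ℝ) < ((t-1:ℕ):ℝ) := by
    have : 1 ≤ t - 1 := by omega
    exact_mod_cast Nat.lt_of_lt_of_le Nat.zero_lt_one this
  have hht1 : ψ (t-1) / ψ n - φ (t-1) / φ n = ((t-1:ℕ):ℝ)/(d:ℝ) := by
    have hf := eqf t ht3 htn
    have hg := eqg t ht3 htn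
    rw [hedge] at hf
    simp only [if_true] at hf
    have hcond : (E n t && !(n == n && t == t)) = false := hBnt
    rw [hcond] at hg
    simp only [Bool.false_eq_true, if_false] at hg
    have h0 := hzeroU t (le_refl t) htn
    have hsum : ∑ w ∈ Finset.Icc (t+1) (n-1), (ψ w / ψ n)/(w:ℝ)
        = ∑ w ∈ Finset.Icc (t+1) (n-1), (φ w / φ n)/(w:ℝ) := by
      apply Finset.sum_congr rfl
      intro w hw
      rw [Finset.mem_Icc] at hw
      rw [hzeroU w (by omega) hw.2]
    have hstep : (ψ (t-1) / ψ n - φ (t-1) / φ n)/((t-1:ℕ):ℝ) = 1/(d:ℝ) := by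
      rw [sub_div]
      rw [h0, hsum] at hg
      linarith [hf, hg]
    rw [div_eq_iff (ne_of_gt ht1pos)] at hstep
    rw [hstep]; ring
  -- the deleted-edge constant
  set aR : ℝ := 1/((d:ℝ)-1) - 1/(d:ℝ) with haRdef
  have haR' : aR = (1/(d:ℝ))*(1/((d:ℝ)-1)) := by rw [haRdef]; field_simp; ring
  have haR0 : (0:ℝ) ≤ aR := by rw [haR']; positivity
  have hQ1 : (ψ (t-1)/ψ n - φ (t-1)/φ n)/((t-1).descFactorial 1 : ℝ) = 1/(d:ℝ) := by
    rw [Nat.descFactorial_one, hht1, div_right_comm, div_self (ne_of_gt ht1pos)]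
  have hT1' : (∑ u ∈ Finset.Icc (t-1+1) (t-1), (ψ u/ψ n - φ u/φ n)/(u:ℝ)) = 0 := by
    rw [show t-1+1 = t from by omega, Finset.Icc_eq_empty (by omega), Finset.sum_empty]
  have hc : ∀ k : ℕ, 0 ≤ (if E n (t-k) then aR else 0) ∧ (if E n (t-k) then aR else 0) ≤ aR := by
    intro k
    by_cases h : E n (t-k) = true
    · rw [if_pos h]; exact ⟨haR0, le_refl _⟩
    · rw [if_neg h]; exact ⟨le_refl _, haR0⟩
  -- T recursion
  have hrecT : ∀ k, 1 ≤ k → k ≤ t-3 →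
      (∑ u ∈ Finset.Icc (t-(k+1)+1) (t-1), (ψ u/ψ n - φ u/φ n)/(u:ℝ))
      = (∑ u ∈ Finset.Icc (t-k+1) (t-1), (ψ u/ψ n - φ u/φ n)/(u:ℝ))
        + ((ψ (t-k)/ψ n - φ (t-k)/φ n)/((t-1).descFactorial k : ℝ))
            * ((t-1).descFactorial (k-1) : ℝ) := by
    intro k hk1 hk3
    have e0 : t-(k+1)+1 = t-k := by omega
    rw [e0]
    have hins : Finset.Icc (t-k) (t-1) = insert (t-k) (Finset.Icc (t-k+1) (t-1)) := by
      ext x; rw [Finset.mem_insert, Finset.mem_Icc, Finset.mem_Icc]; omega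
    rw [hins, Finset.sum_insert (by rw [Finset.mem_Icc]; omega)]
    rw [add_comm]
    congr 1
    have hFsplit : ((t-1).descFactorial k : ℝ)
        = ((t-k:ℕ):ℝ) * ((t-1).descFactorial (k-1) : ℝ) := by
      obtain ⟨m0, rfl⟩ : ∃ m0, k = m0+1 := ⟨k-1, by omega⟩
      simp only [Nat.add_sub_cancel]
      rw [Nat.descFactorial_succ]
      have e : t-1-m0 = t-(m0+1) := by omega
      rw [e]; push_cast; ring
    have htk0 : ((t-k:ℕ):ℝ) ≠ 0 := by
      have hpos : (0:ℕ) < t-k := by omega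
      exact_mod_cast Nat.pos_iff_ne_zero.mp hpos
    have hDk0 : ((t-1).descFactorial (k-1) : ℝ) ≠ 0 := by
      have hpos : 0 < (t-1).descFactorial (k-1) := descFactorial_pos' (by omega)
      exact_mod_cast Nat.pos_iff_ne_zero.mp hpos
    rw [hFsplit]
    field_simp
  -- Q recursion
  have hrecQ : ∀ k, 1 ≤ k → k ≤ t-3 →
      (ψ (t-(k+1))/ψ n - φ (t-(k+1))/φ n)/((t-1).descFactorial (k+1) : ℝ)
      = (ψ (t-k)/ψ n - φ (t-k)/φ n)/((t-1).descFactorial k : ℝ)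
        - ((∑ u ∈ Finset.Icc (t-k+1) (t-1), (ψ u/ψ n - φ u/φ n)/(u:ℝ))
            + (if E n (t-k) then aR else 0))/((t-1).descFactorial k : ℝ) := by
    intro k hk1 hk3
    have h3v : 3 ≤ t-k := by omega
    have hvn : t-k ≤ n-1 := by omega
    have hf := eqf (t-k) h3v hvn
    have hg := eqg (t-k) h3v hvn
    have hBcond : (E n (t-k) && !(n == n && (t-k) == t)) = E n (t-k) := hBn (t-k) (by omega)
    rw [hBcond] at hg
    have eidx : t-k-1 = t-(k+1) := by omega
    rw [eidx] at hf hg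
    -- sum over the tail vanishes in the difference
    have hTsum : (∑ u ∈ Finset.Icc (t-k+1) (n-1), (ψ u/ψ n)/(u:ℝ))
        - (∑ u ∈ Finset.Icc (t-k+1) (n-1), (φ u/φ n)/(u:ℝ))
        = ∑ u ∈ Finset.Icc (t-k+1) (t-1), (ψ u/ψ n - φ u/φ n)/(u:ℝ) := by
      rw [← Finset.sum_sub_distrib]
      have hss := Finset.sum_subset
        (Finset.Icc_subset_Icc (le_refl (t-k+1)) (by omega : t-1 ≤ n-1))
        (f := fun u => (ψ u/ψ n)/(u:ℝ) - (φ u/φ n)/(u:ℝ))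
        (by
          intro x hx hnx
          rw [Finset.mem_Icc] at hx
          rw [Finset.mem_Icc] at hnx
          have hxa : t ≤ x := by omega
          simp only [hzeroU x hxa hx.2, sub_self])
      rw [← hss]
      apply Finset.sum_congr rfl
      intro u _
      simp only [div_sub_div_same]
    have hite : (if E n (t-k) then 1/((d:ℝ)-1) else 0) - (if E n (t-k) then 1/(d:ℝ) else 0)
        = (if E n (t-k) then aR else 0) := by
      by_cases hcase : E n (t-k) = true
      · rw [if_pos hcase, if_pos hcase, if_pos hcase, haRdef]
      · rw [if_neg hcase, if_neg hcase, if_neg hcase]; ring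
    have hmpos : (0:ℝ) < ((t-(k+1):ℕ):ℝ) := by
      have hge : 1 ≤ t-(k+1) := by omega
      exact_mod_cast Nat.lt_of_lt_of_le Nat.zero_lt_one hge
    have hkey : (ψ (t-(k+1))/ψ n - φ (t-(k+1))/φ n)/((t-(k+1):ℕ):ℝ)
        = (ψ (t-k)/ψ n - φ (t-k)/φ n)
          - (∑ u ∈ Finset.Icc (t-k+1) (t-1), (ψ u/ψ n - φ u/φ n)/(u:ℝ))
          - (if E n (t-k) then aR else 0) := by
      rw [sub_div]
      linarith [hf, hg, hite, hTsum]
    rw [div_eq_iff (ne_of_gt hmpos)] at hkey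
    have hFs : ((t-1).descFactorial (k+1) : ℝ)
        = ((t-(k+1):ℕ):ℝ) * ((t-1).descFactorial k : ℝ) := by
      rw [Nat.descFactorial_succ]
      have e : t-1-k = t-(k+1) := by omega
      rw [e]; push_cast; ring
    rw [hkey, hFs]
    rw [mul_comm (ψ (t-k)/ψ n - φ (t-k)/φ n
          - (∑ u ∈ Finset.Icc (t-k+1) (t-1), (ψ u/ψ n - φ u/φ n)/(u:ℝ))
          - (if E n (t-k) then aR else 0)) (((t-(k+1):ℕ)):ℝ)]
    rw [mul_div_mul_left _ _ (ne_of_gt hmpos)]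
    rw [sub_sub, sub_div, add_div]
  have MAIN := abstract_main ht5 hdR2 haRdef
    (fun k => (ψ (t-k)/ψ n - φ (t-k)/φ n)/((t-1).descFactorial k : ℝ))
    (fun k => ∑ u ∈ Finset.Icc (t-k+1) (t-1), (ψ u/ψ n - φ u/φ n)/(u:ℝ))
    (fun k => if E n (t-k) then aR else 0)
    hc hQ1 hT1' hrecQ hrecT
  intro k hk3 hk2
  obtain ⟨hl, hu, -, -⟩ := MAIN k (by omega) hk2
  refine ⟨hl, ?_, hu⟩
  exact Lpos ht5 hdR2 (by omega) hk2

end PR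
end

section
/- Let D ∈ 𝒟′_n and let D⁻ be D with the edge (v_n,v_t) deleted, where 3 ≤ t ≤ n−1 is the largest index such that (v_n,v_t) ∈ E(D). Then the principal ratios satisfy γ(D⁻) > γ(D). -/
namespace PR

noncomputable def Fq (m : ℕ) : ℕ → ℝ
  | 0 => 0
  | 1 => 1
  | (k+2) => ((m : ℝ) - k) * (Fq m (k+1) - Fq m k)

noncomputable def g (m : ℕ) : ℝ := 2 * (Fq m (m-2) - Fq m (m-3))

lemma Fq_succ_succ (m k : ℕ) : Fq m (k+2) = ((m : ℝ) - k) * (Fq m (k+1) - Fq m k) := rfl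

lemma Fq_cross (m : ℕ) : ∀ k, k ≤ m → Fq (m+1) (k+1) = (Nat.descFactorial m k : ℝ) + Fq m k := by
  intro k
  induction k using Nat.strong_induction_on with
  | _ k ih =>
    match k with
    | 0 => intro _; simp [Fq]
    | 1 => intro h; simp [Fq, Nat.descFactorial]
    | (k+2) =>
      intro hk
      have h1 : k + 1 ≤ m := by omega
      have h0 : k ≤ m := by omega
      rw [show k+2+1 = (k+1)+2 by ring, Fq_succ_succ, ih (k+1) (by omega) h1, ih k (by omega) h0]
      rw [Fq_succ_succ]
      have hd1 : (Nat.descFactorial m (k+1) : ℝ) = ((m - k : ℕ) : ℝ) * Nat.descFactorial m k := by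
        rw [Nat.descFactorial_succ]; push_cast; ring
      have hd2 : (Nat.descFactorial m (k+2) : ℝ) = ((m - (k+1) : ℕ) : ℝ) * Nat.descFactorial m (k+1) := by
        rw [Nat.descFactorial_succ]; push_cast; ring
      have c1 : ((m - k : ℕ) : ℝ) = (m : ℝ) - k := by
        have := Nat.cast_sub h0 (R := ℝ); rw [this]
      have c2 : ((m - (k+1) : ℕ) : ℝ) = (m : ℝ) - (k+1) := by
        have := Nat.cast_sub h1 (R := ℝ); rw [this]; push_cast; ring
      rw [hd2, hd1, c1, c2]
      push_cast
      ring

lemma g_small {s : ℕ} (hs : s ≤ 2) : g s = 0 := by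
  interval_cases s <;> simp [g, Fq]

lemma g_three : g 3 = 2 := by
  norm_num [g, Fq]

lemma g_succ {m : ℕ} (hm : 3 ≤ m) :
    g (m+1) = g m + 4 * (Nat.descFactorial m (m-3) : ℝ) := by
  have e1 : m + 1 - 2 = (m-2) + 1 := by omega
  have e2 : m + 1 - 3 = (m-3) + 1 := by omega
  have e3 : m - 2 = (m-3) + 1 := by omega
  have d1 : Fq (m+1) ((m-2)+1) = (Nat.descFactorial m (m-2) : ℝ) + Fq m (m-2) :=
    Fq_cross m (m-2) (by omega)
  have d2 : Fq (m+1) ((m-3)+1) = (Nat.descFactorial m (m-3) : ℝ) + Fq m (m-3) :=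
    Fq_cross m (m-3) (by omega)
  have hdesc : Nat.descFactorial m ((m-3)+1) = 3 * Nat.descFactorial m (m-3) := by
    rw [Nat.descFactorial_succ]; congr 1; omega
  have h32 : Nat.descFactorial m (m-2) = 3 * Nat.descFactorial m (m-3) := by
    rw [e3]; exact hdesc
  unfold g
  rw [e1, e2, d1, d2, h32]
  push_cast
  ring

lemma g_pos_of_three {t : ℕ} (ht : 3 ≤ t) : 0 < g t := by
  have : ∀ k, 0 < g (3 + k) := by
    intro k
    induction k with
    | zero => rw [g_three]; norm_num
    | succ k ih =>
      have h3 : 3 ≤ 3 + k := by omega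
      have := g_succ h3
      have hd : 0 < (Nat.descFactorial (3+k) (3+k-3) : ℝ) := by
        exact_mod_cast Nat.pos_of_ne_zero (fun h => by have := Nat.descFactorial_eq_zero_iff_lt.mp h; omega)
      rw [show 3 + (k+1) = (3+k)+1 by ring, this]
      positivity
  have := this (t - 3)
  rwa [show 3 + (t-3) = t by omega] at this

lemma g_lt {s t : ℕ} (hst : s < t) (ht : 3 ≤ t) : g s < g t := by
  rcases le_or_gt s 2 with hs | hs
  · rw [g_small hs]; exact g_pos_of_three ht
  · -- 3 ≤ s < t
    have : ∀ k, g s < g (s + k + 1) := by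
      intro k
      induction k with
      | zero =>
        have := g_succ (by omega : 3 ≤ s)
        have hd : 0 < (Nat.descFactorial s (s-3) : ℝ) := by
          exact_mod_cast Nat.pos_of_ne_zero (fun h => by have := Nat.descFactorial_eq_zero_iff_lt.mp h; omega)
        rw [show s + 0 + 1 = s + 1 by ring, this]; nlinarith
      | succ k ih =>
        have h3 : 3 ≤ s + k + 1 := by omega
        have := g_succ h3
        have hd : 0 < (Nat.descFactorial (s+k+1) (s+k+1-3) : ℝ) := by
          exact_mod_cast Nat.pos_of_ne_zero (fun h => by have := Nat.descFactorial_eq_zero_iff_lt.mp h; omega)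
        rw [show s + (k+1) + 1 = (s+k+1)+1 by ring, this]
        nlinarith
    have := this (t - s - 1)
    rwa [show s + (t - s - 1) + 1 = t by omega] at this

/-! ### Walks and distances -/

lemma walk_append {E : ℕ → ℕ → Bool} :
    ∀ {k l u v w}, WalkLen E k u v → WalkLen E l v w → WalkLen E (k + l) u w := by
  intro k
  induction k with
  | zero =>
    intro l u v w h1 h2
    cases h1
    rw [Nat.zero_add]
    exact h2
  | succ k ih =>
    rintro l u v w ⟨x, hx, hw⟩ h2
    rw [show k + 1 + l = (k + l) + 1 by omega]
    exact ⟨x, hx, ih hw h2⟩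

lemma dist_le {E : ℕ → ℕ → Bool} {u v k : ℕ} (h : WalkLen E k u v) : dist E u v ≤ k :=
  Nat.sInf_le h

lemma walk_of_dist {E : ℕ → ℕ → Bool} {u v : ℕ} (h : ∃ k, WalkLen E k u v) :
    WalkLen E (dist E u v) u v :=
  Nat.sInf_mem h

lemma dist_triangle {E : ℕ → ℕ → Bool} {u v w : ℕ}
    (h1 : ∃ k, WalkLen E k u v) (h2 : ∃ k, WalkLen E k v w) :
    dist E u w ≤ dist E u v + dist E v w :=
  dist_le (walk_append (walk_of_dist h1) (walk_of_dist h2))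

lemma walk_path {n : ℕ} {E : ℕ → ℕ → Bool}
    (hpath : ∀ i, 1 ≤ i → i < n → E i (i+1) = true) :
    ∀ d i, 1 ≤ i → i + d ≤ n → WalkLen E d i (i + d) := by
  intro d
  induction d with
  | zero => intro i _ _; rfl
  | succ d ih =>
    intro i h1 h2
    refine ⟨i + 1, hpath i h1 (by omega), ?_⟩
    have := ih (i+1) (by omega) (by omega)
    rwa [show i + 1 + d = i + (d + 1) by omega] at this

lemma dist_path {n : ℕ} {E : ℕ → ℕ → Bool}
    (hpath : ∀ i, 1 ≤ i → i < n → E i (i+1) = true)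
    {i j : ℕ} (h1 : 1 ≤ i) (hij : i ≤ j) (hjn : j ≤ n) :
    dist E i j ≤ j - i := by
  have := walk_path hpath (j - i) i h1 (by omega)
  rw [show i + (j - i) = j by omega] at this
  exact dist_le this

/-! ### Structure of graphs in the family -/

section Structure

variable {n : ℕ} {E : ℕ → ℕ → Bool} {φ : ℕ → ℝ}

lemma no_shortcut (hdig : IsDigraph n E) (hsc : StronglyConnected n E)
    (hpath : ∀ i, 1 ≤ i → i < n → E i (i+1) = true)
    (hd1n : dist E 1 n = n - 1) (hn : 4 ≤ n) :
    ∀ u j, 1 ≤ u → u ≤ n - 1 → E u j = true → j ≤ u + 1 := by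
  intro u j hu1 hun hE
  by_contra hcon
  push_neg at hcon
  obtain ⟨hu, hj, hune⟩ := hdig u j hE
  rw [Finset.mem_Icc] at hu hj
  have h1n : (1:ℕ) ∈ Finset.Icc 1 n := by rw [Finset.mem_Icc]; omega
  have hnn : n ∈ Finset.Icc 1 n := by rw [Finset.mem_Icc]; omega
  have humem : u ∈ Finset.Icc 1 n := by rw [Finset.mem_Icc]; omega
  have hjmem : j ∈ Finset.Icc 1 n := by rw [Finset.mem_Icc]; omega
  -- dist u n ≥ n - u
  have hlow : n - 1 ≤ dist E 1 u + dist E u n :=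
    hd1n ▸ dist_triangle (hsc 1 h1n u humem) (hsc u humem n hnn)
  have h1u : dist E 1 u ≤ u - 1 := dist_path hpath le_rfl hu.1 hu.2
  -- dist u n ≤ 1 + dist j n ≤ 1 + (n - j)
  have hujn : dist E u n ≤ dist E u j + dist E j n :=
    dist_triangle (hsc u humem j hjmem) (hsc j hjmem n hnn)
  have huj : dist E u j ≤ 1 := dist_le ⟨j, hE, rfl⟩
  have hjn : dist E j n ≤ n - j := dist_path hpath hj.1 hj.2 le_rfl
  omega

end Structure

section Structure2

variable {n : ℕ} {E : ℕ → ℕ → Bool}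

lemma row_one (hdig : IsDigraph n E) (hsc : StronglyConnected n E)
    (hpath : ∀ i, 1 ≤ i → i < n → E i (i+1) = true)
    (hd1n : dist E 1 n = n - 1) (hn : 4 ≤ n) :
    ∀ j, E 1 j = true ↔ j = 2 := by
  intro j
  constructor
  · intro hE
    have h2 := no_shortcut hdig hsc hpath hd1n hn 1 j le_rfl (by omega) hE
    obtain ⟨_, hjm, hne⟩ := hdig 1 j hE
    rw [Finset.mem_Icc] at hjm
    omega
  · rintro rfl
    exact hpath 1 le_rfl (by omega)

lemma row_mid (hdig : IsDigraph n E) (hsc : StronglyConnected n E)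
    (hpath : ∀ i, 1 ≤ i → i < n → E i (i+1) = true)
    (hd1n : dist E 1 n = n - 1) (hn : 4 ≤ n)
    (hdeg : ∀ i, 2 ≤ i → i ≤ n - 1 → outDeg n E i = i) :
    ∀ i, 2 ≤ i → i ≤ n - 1 → ∀ j, E i j = true ↔ (1 ≤ j ∧ j ≤ i + 1 ∧ j ≠ i) := by
  intro i hi2 hin
  have hfil : (Finset.Icc 1 n).filter (fun j => E i j) = (Finset.Icc 1 (i+1)).erase i := by
    apply Finset.eq_of_subset_of_card_le
    · intro j hj
      rw [Finset.mem_filter, Finset.mem_Icc] at hj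
      obtain ⟨⟨hj1, hjn⟩, hE⟩ := hj
      have hle := no_shortcut hdig hsc hpath hd1n hn i j (by omega) hin hE
      obtain ⟨_, _, hne⟩ := hdig i j hE
      rw [Finset.mem_erase, Finset.mem_Icc]
      exact ⟨fun h => hne h.symm, hj1, hle⟩
    · have h1 : ((Finset.Icc 1 (i+1)).erase i).card = i := by
        rw [Finset.card_erase_of_mem (by rw [Finset.mem_Icc]; omega), Nat.card_Icc]
        omega
      have h2 := hdeg i hi2 hin
      unfold outDeg at h2
      omega
  intro j
  constructor
  · intro hE
    obtain ⟨_, hjmem, hne⟩ := hdig i j hE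
    have : j ∈ (Finset.Icc 1 n).filter (fun j => E i j) := Finset.mem_filter.mpr ⟨hjmem, hE⟩
    rw [hfil, Finset.mem_erase, Finset.mem_Icc] at this
    exact ⟨this.2.1, this.2.2, this.1⟩
  · rintro ⟨h1, h2, h3⟩
    have : j ∈ (Finset.Icc 1 (i+1)).erase i := by
      rw [Finset.mem_erase, Finset.mem_Icc]; exact ⟨h3, h1, h2⟩
    rw [← hfil, Finset.mem_filter] at this
    exact this.2

end Structure2

section Key

variable {n : ℕ} {E : ℕ → ℕ → Bool} {φ : ℕ → ℝ}

lemma outdeg_last (hSsub : ∀ j, E n j = true → 1 ≤ j ∧ j ≤ n - 1) :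
    outDeg n E n = ((Finset.Icc 1 (n-1)).filter (fun s => E n s)).card := by
  unfold outDeg
  congr 1
  ext j
  simp only [Finset.mem_filter, Finset.mem_Icc]
  constructor
  · rintro ⟨⟨h1, _⟩, hE⟩; exact ⟨⟨h1, (hSsub j hE).2⟩, hE⟩
  · rintro ⟨⟨h1, h2⟩, hE⟩; exact ⟨⟨h1, by omega⟩, hE⟩

lemma key (hn : 4 ≤ n) (hP : IsPerron n E φ)
    (hrow1 : ∀ j, E 1 j = true ↔ j = 2)
    (hrow : ∀ i, 2 ≤ i → i ≤ n - 1 → ∀ j, E i j = true ↔ (1 ≤ j ∧ j ≤ i + 1 ∧ j ≠ i))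
    (hSsub : ∀ j, E n j = true → 1 ≤ j ∧ j ≤ n - 1) :
    φ 2 = g n * φ n
      - (φ n / (((Finset.Icc 1 (n-1)).filter (fun s => E n s)).card : ℝ)) *
        ∑ s ∈ (Finset.Icc 1 (n-1)).filter (fun s => E n s), g s := by
  set Sf := (Finset.Icc 1 (n-1)).filter (fun s => E n s) with hSf
  set T : ℕ → ℝ := fun v => ∑ i ∈ Finset.Icc v (n-1), φ i / (i : ℝ) with hT
  have memn : n ∈ Finset.Icc 1 n := by rw [Finset.mem_Icc]; omega
  have hodn : outDeg n E n = Sf.card := outdeg_last hSsub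
  have hodi : ∀ i, 2 ≤ i → i ≤ n - 1 → outDeg n E i = i := by
    intro i hi2 hin
    unfold outDeg
    have : (Finset.Icc 1 n).filter (fun j => E i j) = (Finset.Icc 1 (i+1)).erase i := by
      ext j
      simp only [Finset.mem_filter, Finset.mem_Icc, Finset.mem_erase, hrow i hi2 hin j]
      omega
    rw [this, Finset.card_erase_of_mem (by rw [Finset.mem_Icc]; omega), Nat.card_Icc]
    omega
  -- equation at vertex n
  have eqn : φ n = φ (n-1) / ((n-1 : ℕ) : ℝ) := by
    have h := hP.2.2 n memn
    have hpt : ∀ u ∈ Finset.Icc 1 n,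
        (if E u n then φ u / (outDeg n E u : ℝ) else 0)
        = if u = n - 1 then φ (n-1) / ((n-1:ℕ) : ℝ) else 0 := by
      intro u hu
      rw [Finset.mem_Icc] at hu
      by_cases hun : u = n - 1
      · subst hun
        rw [if_pos ((hrow (n-1) (by omega) le_rfl n).mpr ⟨by omega, by omega, by omega⟩),
          if_pos rfl, hodi (n-1) (by omega) le_rfl]
      · rw [if_neg hun]
        have hEf : E u n = false := by
          by_contra hc
          rw [Bool.not_eq_false] at hc
          rcases eq_or_ne u 1 with rfl | hu1
          · have := (hrow1 n).mp hc; omega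
          · rcases eq_or_ne u n with heq | hu2
            · rw [heq] at hc; have := (hSsub n hc).2; omega
            · have := ((hrow u (by omega) (by omega) n).mp hc); omega
        rw [hEf]
        simp
    rw [h, Finset.sum_congr rfl hpt,
      Finset.sum_ite_eq' (Finset.Icc 1 n) (n-1) (fun _ => φ (n-1) / ((n-1:ℕ) : ℝ)),
      if_pos (by rw [Finset.mem_Icc]; omega)]
  -- equation at a middle vertex
  have eqv : ∀ v, 3 ≤ v → v ≤ n - 1 →
      φ v = φ (v-1) / ((v-1 : ℕ) : ℝ) + T (v+1)
        + (if E n v then φ n / (Sf.card : ℝ) else 0) := by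
    intro v h3 hvn
    have h := hP.2.2 v (by rw [Finset.mem_Icc]; omega)
    have hpt : ∀ u ∈ Finset.Icc 1 n,
        (if E u v then φ u / (outDeg n E u : ℝ) else 0)
        = (if u = v - 1 then φ (v-1) / ((v-1:ℕ) : ℝ) else 0)
          + (if u ∈ Finset.Icc (v+1) (n-1) then φ u / (u : ℝ) else 0)
          + (if u = n then (if E n v then φ n / (Sf.card : ℝ) else 0) else 0) := by
      intro u hu
      rw [Finset.mem_Icc] at hu
      rcases eq_or_ne u (v-1) with heq | h1
      · have c1 : E u v = true :=
          (hrow u (by omega) (by omega) v).mpr ⟨by omega, by omega, by omega⟩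
        have c2 : u ∉ Finset.Icc (v+1) (n-1) := by rw [Finset.mem_Icc]; omega
        have c3 : u ≠ n := by omega
        rw [if_pos c1, if_pos heq, if_neg c2, if_neg c3, hodi u (by omega) (by omega), heq]
        ring
      · rcases eq_or_ne u n with heq | h2
        · rw [heq] at h1 ⊢
          have c2 : n ∉ Finset.Icc (v+1) (n-1) := by rw [Finset.mem_Icc]; omega
          rw [if_neg h1, if_neg c2, if_pos rfl, hodn]
          by_cases hE : E n v
          · rw [if_pos hE]; ring
          · rw [if_neg hE]; ring
        · by_cases hmid : v + 1 ≤ u ∧ u ≤ n - 1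
          · have c1 : E u v = true :=
              (hrow u (by omega) (by omega) v).mpr ⟨by omega, by omega, by omega⟩
            have c2 : u ∈ Finset.Icc (v+1) (n-1) := by rw [Finset.mem_Icc]; exact hmid
            rw [if_neg h1, if_pos c2, if_neg h2, if_pos c1, hodi u (by omega) (by omega)]
            ring
          · push_neg at hmid
            have hEf : E u v = false := by
              by_contra hc
              rw [Bool.not_eq_false] at hc
              rcases eq_or_ne u 1 with rfl | hu1
              · have := (hrow1 v).mp hc; omega
              · have := (hrow u (by omega) (by omega) v).mp hc
                omega
            have c2 : u ∉ Finset.Icc (v+1) (n-1) := by rw [Finset.mem_Icc]; omega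
            rw [hEf, if_neg h1, if_neg c2, if_neg h2]
            simp
    have hinter : Finset.Icc 1 n ∩ Finset.Icc (v+1) (n-1) = Finset.Icc (v+1) (n-1) := by
      apply Finset.inter_eq_right.mpr
      intro j hj
      rw [Finset.mem_Icc] at *
      omega
    rw [h, Finset.sum_congr rfl hpt, Finset.sum_add_distrib, Finset.sum_add_distrib,
      Finset.sum_ite_eq' (Finset.Icc 1 n) (v-1) (fun _ => φ (v-1) / ((v-1:ℕ) : ℝ)),
      if_pos (by rw [Finset.mem_Icc]; omega),
      Finset.sum_ite_mem, hinter,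
      Finset.sum_ite_eq' (Finset.Icc 1 n) n
        (fun _ => if E n v then φ n / (Sf.card : ℝ) else 0),
      if_pos memn]
  -- tail-sum split
  have Tsplit : ∀ v, 1 ≤ v → v ≤ n - 1 → T v = φ v / (v : ℝ) + T (v+1) := by
    intro v h1 h2
    have hins : Finset.Icc v (n-1) = insert v (Finset.Icc (v+1) (n-1)) := by
      ext j
      simp only [Finset.mem_Icc, Finset.mem_insert]
      omega
    simp only [hT]
    rw [hins, Finset.sum_insert (by rw [Finset.mem_Icc]; omega)]
  have Tn : T n = 0 := by
    simp only [hT]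
    rw [Finset.Icc_eq_empty (by omega), Finset.sum_empty]
  -- the T recurrence
  have Trec : ∀ v, 3 ≤ v → v ≤ n - 1 →
      T (v-1) = ((v:ℝ)+1) * (T v - T (v+1)) - (if E n v then φ n / (Sf.card : ℝ) else 0) := by
    intro v h3 hvn
    have e1 := eqv v h3 hvn
    have e2 := Tsplit (v-1) (by omega) (by omega)
    have e3 := Tsplit v (by omega) hvn
    rw [show v - 1 + 1 = v by omega] at e2
    have hv0 : ((v:ℕ) : ℝ) ≠ 0 := by
      have : (0:ℝ) < (v:ℝ) := by exact_mod_cast (by omega : 0 < v)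
      linarith
    have hφv : φ v = (v:ℝ) * (T v - T (v+1)) := by
      rw [e3]; field_simp; ring
    have hφv1 : φ (v-1) / ((v-1 : ℕ) : ℝ) = T (v-1) - T v := by
      rw [e2]; ring
    rw [hφv, hφv1] at e1
    set c := (if E n v then φ n / (Sf.card : ℝ) else 0) with hc
    linarith [e1]
  -- the main induction
  have main : ∀ j, j ≤ n - 2 →
      T (n - j) = Fq n j * φ n
        - (φ n / (Sf.card : ℝ)) * ∑ s ∈ Sf, Fq s (s - (n - j)) := by
    intro j
    induction j using Nat.strong_induction_on with
    | _ j ih =>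
      match j with
      | 0 =>
        intro _
        have hz : ∀ s ∈ Sf, Fq s (s - (n - 0)) = 0 := by
          intro s hs
          rw [hSf, Finset.mem_filter, Finset.mem_Icc] at hs
          rw [show s - (n - 0) = 0 by omega]
          simp [Fq]
        rw [Finset.sum_congr rfl hz, Finset.sum_const_zero, show n - 0 = n by omega, Tn]
        simp [Fq]
      | 1 =>
        intro _
        have hz : ∀ s ∈ Sf, Fq s (s - (n - 1)) = 0 := by
          intro s hs
          rw [hSf, Finset.mem_filter, Finset.mem_Icc] at hs
          rw [show s - (n - 1) = 0 by omega]
          simp [Fq]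
        have hT1 : T (n - 1) = φ n := by
          rw [Tsplit (n-1) (by omega) le_rfl, show n - 1 + 1 = n by omega, Tn, ← eqn]
          ring
        rw [Finset.sum_congr rfl hz, Finset.sum_const_zero, hT1]
        simp [Fq]
      | (j+2) =>
        intro hj
        set v := n - (j+1) with hv
        have h1 := ih (j+1) (by omega) (by omega)
        have h0 := ih j (by omega) (by omega)
        have hrec := Trec v (by omega) (by omega)
        rw [show v - 1 = n - (j+2) by omega, show v + 1 = n - j by omega] at hrec
        rw [hrec, h1, h0]
        set c := (if E n v then (1:ℝ) else 0) with hc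
        have hcx : (if E n v then φ n / (Sf.card : ℝ) else 0) = (φ n / (Sf.card : ℝ)) * c := by
          by_cases hE : E n v
          · rw [hc, if_pos hE, if_pos hE]; ring
          · rw [hc, if_neg hE, if_neg hE]; ring
        have hterm : ∀ s ∈ Sf, Fq s (s - (n - (j+2)))
            = ((v:ℝ)+1) * (Fq s (s - (n - (j+1))) - Fq s (s - (n - j)))
              + (if s = v then (1:ℝ) else 0) := by
          intro s hs
          rw [hSf, Finset.mem_filter, Finset.mem_Icc] at hs
          rcases lt_trichotomy s v with hlt | heq | hgt
          · rw [show s - (n-(j+2)) = 0 by omega, show s - (n-(j+1)) = 0 by omega,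
              show s - (n-j) = 0 by omega, if_neg (show s ≠ v by omega)]
            simp [Fq]
          · rw [heq, show v - (n-(j+2)) = 1 by omega, show v - (n-(j+1)) = 0 by omega,
              show v - (n-j) = 0 by omega, if_pos rfl]
            simp [Fq]
          · rw [show s - (n-(j+2)) = (s - v - 1) + 2 by omega,
              show s - (n-(j+1)) = (s - v - 1) + 1 by omega,
              show s - (n-j) = s - v - 1 by omega,
              if_neg (show s ≠ v by omega), Fq_succ_succ]
            have hcast : ((s:ℝ) - ((s - v - 1 : ℕ) : ℝ)) = (v:ℝ) + 1 := by
              have h' : (s - v - 1 : ℕ) + (v + 1) = s := by omega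
              have := congrArg (fun z : ℕ => (z : ℝ)) h'
              push_cast at this
              linarith
            simp only [Nat.add_sub_cancel]
            rw [hcast]
            ring
        have hsum : ∑ s ∈ Sf, Fq s (s - (n - (j+2)))
            = ((v:ℝ)+1) * ((∑ s ∈ Sf, Fq s (s - (n - (j+1)))) - ∑ s ∈ Sf, Fq s (s - (n - j))) + c := by
          rw [Finset.sum_congr rfl hterm, Finset.sum_add_distrib,
            Finset.sum_ite_eq' Sf v (fun _ => (1:ℝ))]
          rw [← Finset.sum_sub_distrib, ← Finset.mul_sum]
          congr 1
          rw [hc]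
          by_cases hE : E n v
          · rw [if_pos hE, if_pos (by
              rw [hSf, Finset.mem_filter, Finset.mem_Icc]
              exact ⟨⟨by omega, by omega⟩, hE⟩)]
          · rw [if_neg hE, if_neg (fun hcmem => hE (by
              rw [hSf, Finset.mem_filter] at hcmem
              exact hcmem.2))]
        rw [hcx, hsum, Fq_succ_succ]
        have hcast2 : (v:ℝ) + 1 = (n:ℝ) - (j:ℝ) := by
          have h' : v + (j + 1) = n := by omega
          have := congrArg (fun z : ℕ => (z : ℝ)) h'
          push_cast at this
          linarith
        rw [hcast2]
        ring
  -- conclusion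
  have hT2 := main (n-2) le_rfl
  have hT3 := main (n-3) (by omega)
  rw [show n - (n-2) = 2 by omega] at hT2
  rw [show n - (n-3) = 3 by omega] at hT3
  have hsplit2 := Tsplit 2 (by omega) (by omega)
  have hphi2 : φ 2 = 2 * (T 2 - T 3) := by
    rw [hsplit2, show (2:ℕ) + 1 = 3 from rfl]
    push_cast
    ring
  have hgsum : ∑ s ∈ Sf, g s
      = 2 * ((∑ s ∈ Sf, Fq s (s-2)) - ∑ s ∈ Sf, Fq s (s-3)) := by
    rw [← Finset.sum_sub_distrib, Finset.mul_sum]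
    exact Finset.sum_congr rfl fun s _ => rfl
  have hgn : g n = 2 * (Fq n (n-2) - Fq n (n-3)) := rfl
  rw [hphi2, hT2, hT3, hgn, hgsum]
  ring

end Key

/-- Deleting the edge `(v_n,v_t)` from `D ∈ 𝒟′_n` strictly increases the
principal ratio: `γ(D⁻) > γ(D)`. -/
theorem stmt13 (n t : ℕ) (E : ℕ → ℕ → Bool) (φ ψ : ℕ → ℝ)
    (hD : memDn' n E φ)
    (ht3 : 3 ≤ t) (htn : t ≤ n - 1) (hedge : E n t = true)
    (htmax : ∀ t', t < t' → t' ≤ n - 1 → E n t' = false)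
    (hψ : IsPerron n (fun u v => E u v && !(u == n && v == t)) ψ) :
    pratio n ψ > pratio n φ := by
  obtain ⟨hdig, hsc, hP, hpath, hd1n, hdeg, hVmax, hVmin, hsetd, hd2n, hdout, hNout⟩ := hD
  have hn : 4 ≤ n := by omega
  -- structure of E
  have hrow1 : ∀ j, E 1 j = true ↔ j = 2 := row_one hdig hsc hpath hd1n hn
  have hrow : ∀ i, 2 ≤ i → i ≤ n - 1 → ∀ j, E i j = true ↔ (1 ≤ j ∧ j ≤ i + 1 ∧ j ≠ i) :=
    row_mid hdig hsc hpath hd1n hn hdeg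
  have hSsub : ∀ j, E n j = true → 1 ≤ j ∧ j ≤ n - 1 := by
    intro j hE
    obtain ⟨_, hj, hne⟩ := hdig n j hE
    rw [Finset.mem_Icc] at hj
    omega
  have hkey := key hn hP hrow1 hrow hSsub
  -- structure of E'
  have hb : ∀ u, u ≠ n → ∀ v, (E u v && !(u == n && v == t)) = E u v := by
    intro u hu v
    have h0 : (u == n) = false := beq_eq_false_iff_ne.mpr hu
    rw [h0]
    simp
  have hrow1' : ∀ j, (E 1 j && !(1 == n && j == t)) = true ↔ j = 2 := by
    intro j; rw [hb 1 (by omega) j]; exact hrow1 j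
  have hrow' : ∀ i, 2 ≤ i → i ≤ n - 1 → ∀ j,
      (E i j && !(i == n && j == t)) = true ↔ (1 ≤ j ∧ j ≤ i + 1 ∧ j ≠ i) := by
    intro i h2 hin j; rw [hb i (by omega) j]; exact hrow i h2 hin j
  have hSsub' : ∀ j, (E n j && !(n == n && j == t)) = true → 1 ≤ j ∧ j ≤ n - 1 := by
    intro j hE
    rw [Bool.and_eq_true] at hE
    exact hSsub j hE.1
  have hkey' := key hn hψ hrow1' hrow' hSsub'
  -- the two filters
  set Sf := (Finset.Icc 1 (n-1)).filter (fun s => E n s) with hSf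
  have htmem : t ∈ Sf := by
    rw [hSf, Finset.mem_filter, Finset.mem_Icc]
    exact ⟨⟨by omega, htn⟩, hedge⟩
  have hSf'eq : (Finset.Icc 1 (n-1)).filter (fun s => (E n s && !(n == n && s == t))) =
      Sf.erase t := by
    ext s
    simp only [hSf, Finset.mem_filter, Finset.mem_erase, Bool.and_eq_true, Bool.not_eq_true',
      Bool.and_eq_false_iff, beq_iff_eq, beq_eq_false_iff_ne]
    constructor
    · rintro ⟨hm, hE, hor⟩
      rcases hor with h | h
      · exact absurd rfl h
      · exact ⟨h, hm, hE⟩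
    · rintro ⟨hne, hm, hE⟩
      exact ⟨hm, hE, Or.inr hne⟩
  rw [hSf'eq] at hkey'
  -- cardinalities
  have hdeq : outDeg n E n = Sf.card := outdeg_last hSsub
  have hd2 : 2 ≤ Sf.card := by omega
  have hcarderase : (Sf.erase t).card = Sf.card - 1 := Finset.card_erase_of_mem htmem
  have hsum' : ∑ s ∈ Sf.erase t, g s = (∑ s ∈ Sf, g s) - g t :=
    Finset.sum_erase_eq_sub htmem
  -- strict sum bound
  have hbound : ∀ s ∈ Sf.erase t, g s < g t := by
    intro s hs
    rw [Finset.mem_erase] at hs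
    obtain ⟨hne, hsf⟩ := hs
    rw [hSf, Finset.mem_filter, Finset.mem_Icc] at hsf
    have hst : s < t := by
      by_contra hcon
      push_neg at hcon
      have hlt : t < s := by omega
      have := htmax s hlt hsf.1.2
      rw [this] at hsf
      exact absurd hsf.2 (by simp)
    exact g_lt hst ht3
  have hne' : (Sf.erase t).Nonempty := by
    rw [← Finset.card_pos, hcarderase]; omega
  have hsumlt : ∑ s ∈ Sf.erase t, g s < ((Sf.card - 1 : ℕ) : ℝ) * g t := by
    have h := Finset.sum_lt_sum_of_nonempty hne' hbound
    rwa [Finset.sum_const, hcarderase, nsmul_eq_mul] at h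
  -- positivity
  have mem2 : (2:ℕ) ∈ Finset.Icc 1 n := by rw [Finset.mem_Icc]; omega
  have memn : n ∈ Finset.Icc 1 n := by rw [Finset.mem_Icc]; omega
  have hφn : 0 < φ n := hP.1 n memn
  have hψn : 0 < ψ n := hψ.1 n memn
  have hψ2 : 0 < ψ 2 := hψ.1 2 mem2
  have dpos : (0:ℝ) < (Sf.card : ℝ) := by exact_mod_cast (by omega : 0 < Sf.card)
  have d1pos : (0:ℝ) < ((Sf.card - 1 : ℕ) : ℝ) := by exact_mod_cast (by omega : 0 < Sf.card - 1)
  have hcastd : ((Sf.card - 1 : ℕ) : ℝ) = (Sf.card : ℝ) - 1 := by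
    rw [Nat.cast_sub (by omega)]; norm_num
  -- ratios
  have hneI : (Finset.Icc 1 n).Nonempty := ⟨1, by rw [Finset.mem_Icc]; omega⟩
  obtain ⟨hm2I, hmax⟩ := hVmax
  obtain ⟨hmnI, hmin⟩ := hVmin
  have hsupφ : (Finset.Icc 1 n).sup' hneI φ = φ 2 :=
    le_antisymm (Finset.sup'_le _ _ fun u hu => hmax u hu) (Finset.le_sup' φ mem2)
  have hinfφ : (Finset.Icc 1 n).inf' hneI φ = φ n :=
    le_antisymm (Finset.inf'_le φ memn) (Finset.le_inf' _ _ fun u hu => hmin u hu)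
  have hpφ : pratio n φ = φ 2 / φ n := by
    unfold pratio; rw [dif_pos hneI, hsupφ, hinfφ]
  have hsupψ : ψ 2 ≤ (Finset.Icc 1 n).sup' hneI ψ := Finset.le_sup' ψ mem2
  have hinfψle : (Finset.Icc 1 n).inf' hneI ψ ≤ ψ n := Finset.inf'_le ψ memn
  have hinfψpos : 0 < (Finset.Icc 1 n).inf' hneI ψ := by
    obtain ⟨a, ha, hae⟩ := Finset.exists_mem_eq_inf' hneI ψ
    rw [hae]; exact hψ.1 a ha
  have hpψ : ψ 2 / ψ n ≤ pratio n ψ := by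
    unfold pratio; rw [dif_pos hneI]
    exact div_le_div₀ (le_trans (le_of_lt hψ2) hsupψ) hsupψ hinfψpos hinfψle
  -- closed forms of the two ratios
  have hratφ : φ 2 / φ n = g n - (∑ s ∈ Sf, g s) / (Sf.card : ℝ) := by
    rw [hkey]
    field_simp
  have hratψ : ψ 2 / ψ n = g n - (∑ s ∈ Sf.erase t, g s) / ((Sf.card - 1 : ℕ) : ℝ) := by
    rw [hcarderase] at hkey'
    rw [hkey']
    field_simp
  -- the comparison
  have hcore : (∑ s ∈ Sf.erase t, g s) / ((Sf.card - 1 : ℕ) : ℝ)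
      < (∑ s ∈ Sf, g s) / (Sf.card : ℝ) := by
    rw [div_lt_div_iff₀ d1pos dpos, hcastd]
    rw [hcastd] at hsumlt
    rw [hsum'] at hsumlt ⊢
    nlinarith [hsumlt]
  have : pratio n φ < ψ 2 / ψ n := by
    rw [hpφ, hratφ, hratψ]
    linarith
  exact lt_of_lt_of_le this hpψ

end PR
end

section
/- For n ≥ 3, let D₁ be the directed graph on vertices v_1,…,v_n with edges (v_i,v_{i+1}) for 1 ≤ i ≤ n−1, edges (v_j,v_i) for all 1 ≤ i < j ≤ n−1, and the edge (v_n,v_1). Let φ be its Perron vector. Then min_{1≤i≤n} φ(v_i) = φ(v_n), max_{1≤i≤n} φ(v_i) = φ(v_2), and γ(D₁) = φ(v_2)/φ(v_n) = (2/3)·(n/(n−1) + (1/(n−1)!)·Σ_{i=1}^{n−3} i!)·(n−1)!. -/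
namespace PR

/-- The extremal graph `D₁`: path edges `(v_i,v_{i+1})` for `1 ≤ i ≤ n-1`, back edges
`(v_j,v_i)` for `1 ≤ i < j ≤ n-1`, and the edge `(v_n,v_1)`. -/
def E1 (n : ℕ) : ℕ → ℕ → Bool := fun u v =>
  decide ((1 ≤ u ∧ u ≤ n - 1 ∧ v = u + 1) ∨ (1 ≤ v ∧ v < u ∧ u ≤ n - 1) ∨
    (u = n ∧ v = 1))

/-- The extremal graph `D₂`: as `D₁` but with `(v_n,v_2)` instead of `(v_n,v_1)`. -/
def E2 (n : ℕ) : ℕ → ℕ → Bool := fun u v =>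
  decide ((1 ≤ u ∧ u ≤ n - 1 ∧ v = u + 1) ∨ (1 ≤ v ∧ v < u ∧ u ≤ n - 1) ∨
    (u = n ∧ v = 2))

/-- The extremal graph `D₃`: as `D₁` but with both edges `(v_n,v_1)` and `(v_n,v_2)`. -/
def E3 (n : ℕ) : ℕ → ℕ → Bool := fun u v =>
  decide ((1 ≤ u ∧ u ≤ n - 1 ∧ v = u + 1) ∨ (1 ≤ v ∧ v < u ∧ u ≤ n - 1) ∨
    (u = n ∧ (v = 1 ∨ v = 2)))


noncomputable def Y (n v : ℕ) : ℝ :=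
  (v : ℝ) * ((Nat.factorial (n-1) : ℝ) + (Nat.factorial (n-2) : ℝ) +
      ∑ i ∈ Finset.Icc (v-1) (n-3), (Nat.factorial i : ℝ)) /
    (((v : ℝ) + 1) * (Nat.factorial (v-1) : ℝ))

lemma fact_pos (k : ℕ) : (0:ℝ) < (Nat.factorial k : ℝ) := by
  exact_mod_cast Nat.factorial_pos k

lemma fact_pred (k : ℕ) (hk : 1 ≤ k) :
    (Nat.factorial k : ℝ) = (k:ℝ) * (Nat.factorial (k-1) : ℝ) := by
  rw [show k = (k-1) + 1 by omega, Nat.factorial_succ]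
  push_cast
  ring

lemma Y_top (n : ℕ) (hn : 3 ≤ n) : Y n (n-1) = (n:ℝ) - 1 := by
  unfold Y
  rw [show Finset.Icc (n-1-1) (n-3) = ∅ by rw [Finset.Icc_eq_empty_iff]; omega]
  rw [show n-1-1 = n-2 by omega, fact_pred (n-1) (by omega),
    show n-1-1 = n-2 by omega, Finset.sum_empty,
    Nat.cast_sub (by omega : 1 ≤ n)]
  push_cast
  have h2 : (0:ℝ) < (Nat.factorial (n-2) : ℝ) := fact_pos _
  have h3 : (0:ℝ) < (n:ℝ) := by positivity
  rw [div_eq_iff (by nlinarith : ((n:ℝ) - 1 + 1) * (Nat.factorial (n-2) : ℝ) ≠ 0)]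
  ring

lemma Y_top2 (n : ℕ) (hn : 4 ≤ n) : Y n (n-2) = ((n:ℝ) - 1) * ((n:ℝ) - 2) := by
  unfold Y
  rw [show Finset.Icc (n-2-1) (n-3) = {n-3} by
    rw [show n-2-1 = n-3 by omega]; exact Finset.Icc_self _]
  rw [Finset.sum_singleton,
    fact_pred (n-1) (by omega), show n-1-1 = n-2 by omega,
    fact_pred (n-2) (by omega), show n-2-1 = n-3 by omega,
    Nat.cast_sub (by omega : 1 ≤ n), Nat.cast_sub (by omega : 2 ≤ n)]
  push_cast
  have h2 : (0:ℝ) < (Nat.factorial (n-3) : ℝ) := fact_pos _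
  have h3 : (4:ℝ) ≤ (n:ℝ) := by exact_mod_cast hn
  rw [div_eq_iff (by nlinarith : ((n:ℝ) - 2 + 1) * (Nat.factorial (n-3) : ℝ) ≠ 0)]
  ring

lemma Y_rec (n v : ℕ) (hv : 3 ≤ v) (hvn : v ≤ n - 2) (hn : 3 ≤ n) :
    Y n (v-1) = ((v:ℝ) - 1) *
      ((1 + 1/(v:ℝ)) * Y n v - (1 + 1/((v:ℝ)+1)) * Y n (v+1)) := by
  have hn5 : 5 ≤ n := by omega
  unfold Y
  rw [show v+1-1 = v by omega, show v-1-1 = v-2 by omega]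
  rw [show Finset.Icc (v-2) (n-3) = insert (v-2) (Finset.Icc (v-1) (n-3)) by
    ext i; simp only [Finset.mem_insert, Finset.mem_Icc]; omega]
  rw [show Finset.Icc (v-1) (n-3) = insert (v-1) (Finset.Icc v (n-3)) by
    ext i; simp only [Finset.mem_insert, Finset.mem_Icc]; omega]
  rw [Finset.sum_insert (by simp only [Finset.mem_insert, Finset.mem_Icc]; omega),
    Finset.sum_insert (by simp only [Finset.mem_Icc]; omega)]
  have hfv1 : (Nat.factorial (v-1) : ℝ) = ((v:ℝ) - 1) * (Nat.factorial (v-2) : ℝ) := by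
    rw [fact_pred (v-1) (by omega), show v-1-1 = v-2 by omega,
      Nat.cast_sub (by omega : 1 ≤ v)]
    norm_num
  have hfv : (Nat.factorial v : ℝ) = (v:ℝ) * (((v:ℝ) - 1) * (Nat.factorial (v-2) : ℝ)) := by
    rw [fact_pred v (by omega), hfv1]
  rw [hfv, hfv1, Nat.cast_sub (by omega : 1 ≤ v)]
  push_cast
  set S := ∑ i ∈ Finset.Icc v (n-3), (Nat.factorial i : ℝ) with hS
  set b := (Nat.factorial (v-2) : ℝ) with hb
  set F1 := (Nat.factorial (n-1) : ℝ)
  set F2 := (Nat.factorial (n-2) : ℝ)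
  have hb0 : (0:ℝ) < b := fact_pos _
  have hv3 : (3:ℝ) ≤ (v:ℝ) := by exact_mod_cast hv
  have h1 : (v:ℝ) ≠ 0 := by linarith
  have h2 : (v:ℝ) - 1 ≠ 0 := by linarith
  have h3 : (v:ℝ) + 1 ≠ 0 := by linarith
  have h4 : (v:ℝ) + 1 + 1 ≠ 0 := by linarith
  have h5 : b ≠ 0 := ne_of_gt hb0
  field_simp
  ring_nf
  field_simp
  ring

lemma outDeg_low (n u : ℕ) (hn : 3 ≤ n) (h1 : 1 ≤ u) (hu : u ≤ n - 1) :
    outDeg n (E1 n) u = u := by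
  unfold outDeg
  have h : (Finset.Icc 1 n).filter (fun v => E1 n u v) =
      insert (u+1) (Finset.Icc 1 (u-1)) := by
    ext w
    simp only [Finset.mem_filter, Finset.mem_Icc, Finset.mem_insert, E1,
      decide_eq_true_eq, true_and, and_true]
    omega
  rw [h, Finset.card_insert_of_notMem (by simp only [Finset.mem_Icc]; omega)]
  rw [Nat.card_Icc]; omega

lemma outDeg_top (n : ℕ) (hn : 3 ≤ n) : outDeg n (E1 n) n = 1 := by
  unfold outDeg
  have h : (Finset.Icc 1 n).filter (fun v => E1 n n v) = {1} := by
    ext w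
    simp only [Finset.mem_filter, Finset.mem_Icc, Finset.mem_singleton, E1,
      decide_eq_true_eq, true_and, and_true]
    omega
  rw [h]; rfl

lemma eqn_mid (n : ℕ) (hn : 3 ≤ n) (φ : ℕ → ℝ) (hφ : IsPerron n (E1 n) φ)
    (v : ℕ) (h2 : 2 ≤ v) (hv : v ≤ n - 1) :
    φ v = φ (v-1) / ((v:ℝ) - 1) + ∑ u ∈ Finset.Icc (v+1) (n-1), φ u / (u:ℝ) := by
  have h := hφ.2.2 v (by simp only [Finset.mem_Icc]; omega)
  rw [← Finset.sum_filter] at h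
  have hf : (Finset.Icc 1 n).filter (fun u => E1 n u v) =
      insert (v-1) (Finset.Icc (v+1) (n-1)) := by
    ext u
    simp only [Finset.mem_filter, Finset.mem_Icc, Finset.mem_insert, E1,
      decide_eq_true_eq, true_and, and_true]
    omega
  rw [hf, Finset.sum_insert (by simp only [Finset.mem_Icc]; omega)] at h
  rw [outDeg_low n (v-1) hn (by omega) (by omega)] at h
  rw [Finset.sum_congr rfl (fun u hu => by
    rw [outDeg_low n u hn (by simp only [Finset.mem_Icc] at hu; omega)
      (by simp only [Finset.mem_Icc] at hu; omega)])] at h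
  rw [h]
  congr 1
  congr 1
  push_cast [Nat.cast_sub (by omega : 1 ≤ v)]
  ring

lemma eqn_top (n : ℕ) (hn : 3 ≤ n) (φ : ℕ → ℝ) (hφ : IsPerron n (E1 n) φ) :
    φ n = φ (n-1) / ((n:ℝ) - 1) := by
  have h := hφ.2.2 n (by simp only [Finset.mem_Icc]; omega)
  rw [← Finset.sum_filter] at h
  have hf : (Finset.Icc 1 n).filter (fun u => E1 n u n) = {n-1} := by
    ext u
    simp only [Finset.mem_filter, Finset.mem_Icc, Finset.mem_singleton, E1,
      decide_eq_true_eq, true_and, and_true]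
    omega
  rw [hf, Finset.sum_singleton, outDeg_low n (n-1) hn (by omega) le_rfl] at h
  rw [h]
  congr 1
  push_cast [Nat.cast_sub (by omega : 1 ≤ n)]
  ring

lemma eqn_one (n : ℕ) (hn : 3 ≤ n) (φ : ℕ → ℝ) (hφ : IsPerron n (E1 n) φ) :
    φ 1 = φ n + ∑ u ∈ Finset.Icc 2 (n-1), φ u / (u:ℝ) := by
  have h := hφ.2.2 1 (by simp only [Finset.mem_Icc]; omega)
  rw [← Finset.sum_filter] at h
  have hf : (Finset.Icc 1 n).filter (fun u => E1 n u 1) =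
      insert n (Finset.Icc 2 (n-1)) := by
    ext u
    simp only [Finset.mem_filter, Finset.mem_Icc, Finset.mem_insert, E1,
      decide_eq_true_eq, true_and, and_true]
    omega
  rw [hf, Finset.sum_insert (by simp only [Finset.mem_Icc]; omega),
    outDeg_top n hn] at h
  rw [Finset.sum_congr rfl (fun u hu => by
    rw [outDeg_low n u hn (by simp only [Finset.mem_Icc] at hu; omega)
      (by simp only [Finset.mem_Icc] at hu; omega)])] at h
  rw [h]
  norm_num


lemma phi_rec (n : ℕ) (hn : 3 ≤ n) (φ : ℕ → ℝ) (hφ : IsPerron n (E1 n) φ)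
    (v : ℕ) (h2 : 2 ≤ v) (hv : v ≤ n - 2) :
    φ (v-1) = ((v:ℝ) - 1) * ((1 + 1/(v:ℝ)) * φ v - (1 + 1/((v:ℝ)+1)) * φ (v+1)) := by
  have e1 := eqn_mid n hn φ hφ v h2 (by omega)
  have e2 := eqn_mid n hn φ hφ (v+1) (by omega) (by omega)
  rw [show v+1-1 = v by omega] at e2
  rw [show Finset.Icc (v+1) (n-1) = insert (v+1) (Finset.Icc (v+2) (n-1)) by
      ext i; simp only [Finset.mem_insert, Finset.mem_Icc]; omega,
    Finset.sum_insert (by simp only [Finset.mem_Icc]; omega)] at e1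
  have hv2 : (2:ℝ) ≤ (v:ℝ) := by exact_mod_cast h2
  have hc : (((v+1):ℕ):ℝ) = (v:ℝ) + 1 := by push_cast; ring
  rw [hc] at e1 e2
  rw [show (v:ℝ) + 1 - 1 = (v:ℝ) by ring] at e2
  set S := ∑ u ∈ Finset.Icc (v+2) (n-1), φ u / (u:ℝ) with hSdef
  have hne : (v:ℝ) - 1 ≠ 0 := by linarith
  have hS : S = φ (v+1) - φ v / (v:ℝ) := by linarith
  have h := (div_eq_iff hne).mp
    (by linarith : φ (v-1) / ((v:ℝ) - 1) = φ v - (φ (v+1) / ((v:ℝ)+1) + S))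
  rw [hS] at h
  rw [h]; ring

lemma key_s15 (n : ℕ) (hn : 3 ≤ n) (φ : ℕ → ℝ) (hφ : IsPerron n (E1 n) φ) :
    ∀ v, 2 ≤ v → v ≤ n - 1 → φ v = Y n v * φ n := by
  have hn3 : (3:ℝ) ≤ (n:ℝ) := by exact_mod_cast hn
  have main : ∀ k v, v = n - 1 - k → 2 ≤ v → φ v = Y n v * φ n := by
    intro k
    induction k using Nat.strong_induction_on with
    | _ k ih =>
      rcases k with _ | _ | k
      · intro v hv h2
        have hv' : v = n - 1 := by omega
        subst hv'
        have e := eqn_top n hn φ hφ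
        rw [Y_top n hn]
        have hne : (n:ℝ) - 1 ≠ 0 := by linarith
        field_simp at e
        linarith
      · intro v hv h2
        have hn4 : 4 ≤ n := by omega
        have hv' : v = n - 2 := by omega
        subst hv'
        have e0 := eqn_top n hn φ hφ
        have e1 := eqn_mid n hn φ hφ (n-1) (by omega) le_rfl
        rw [show Finset.Icc (n-1+1) (n-1) = ∅ by
            rw [Finset.Icc_eq_empty_iff]; omega, Finset.sum_empty,
          show n-1-1 = n-2 by omega] at e1
        have hcn : ((n-1:ℕ):ℝ) = (n:ℝ) - 1 := by
          push_cast [Nat.cast_sub (by omega : 1 ≤ n)]; ring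
        rw [hcn] at e1
        have hne : (n:ℝ) - 1 ≠ 0 := by linarith
        have hne2 : (n:ℝ) - 1 - 1 ≠ 0 := by linarith
    -- e1 : φ (n-1) = φ (n-2) / (↑n - 1 - 1) + 0
        rw [Y_top2 n hn4]
        have h1 : φ (n-1) = ((n:ℝ)-1) * φ n := by
          rw [e0]; field_simp
        have h2' : φ (n-2) = ((n:ℝ) - 2) * φ (n-1) := by
          rw [add_zero] at e1
          rw [eq_div_iff (by linarith : (n:ℝ) - 1 - 1 ≠ 0)] at e1
          rw [← e1]; ring
        rw [h2', h1]; ring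
      · intro v hv h2
        have hk : v + 1 = n - 1 - (k+1) := by omega
        have hk1 : v + 2 = n - 1 - k := by omega
        have p1 := ih (k+1) (by omega) (v+1) hk (by omega)
        have p2 := ih k (by omega) (v+2) hk1 (by omega)
        have hrec := phi_rec n hn φ hφ (v+1) (by omega) (by omega)
        have yr := Y_rec n (v+1) (by omega) (by omega) hn
        rw [show v+1-1 = v by omega] at hrec yr
        rw [hrec, p1, p2, yr]
        ring
  intro v h2 hv
  exact main (n - 1 - v) v (by omega) h2

lemma Y_ge_one (n v : ℕ) (hn : 3 ≤ n) (h2 : 2 ≤ v) (hv : v ≤ n - 1) :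
    1 ≤ Y n v := by
  unfold Y
  have hb : (0:ℝ) < ((v:ℝ) + 1) * (Nat.factorial (v-1) : ℝ) := by positivity
  rw [le_div_iff₀ hb, one_mul]
  have hT : (0:ℝ) ≤ ∑ i ∈ Finset.Icc (v-1) (n-3), (Nat.factorial i : ℝ) := by
    apply Finset.sum_nonneg; intro i _; positivity
  have hf : (Nat.factorial v : ℝ) ≤ (Nat.factorial (n-1) : ℝ) := by
    exact_mod_cast Nat.factorial_le (by omega : v ≤ n - 1)
  have hfv : (Nat.factorial v : ℝ) = (v:ℝ) * (Nat.factorial (v-1) : ℝ) :=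
    fact_pred v (by omega)
  have hv2 : (2:ℝ) ≤ (v:ℝ) := by exact_mod_cast h2
  have hF2 : (0:ℝ) < (Nat.factorial (n-2) : ℝ) := fact_pos _
  have hfv1 : (0:ℝ) < (Nat.factorial (v-1) : ℝ) := fact_pos _
  nlinarith [mul_le_mul_of_nonneg_left hf (by linarith : (0:ℝ) ≤ (v:ℝ))]

lemma Y_le_Y2 (n v : ℕ) (hn : 3 ≤ n) (h2 : 2 ≤ v) (hv : v ≤ n - 1) :
    Y n v ≤ Y n 2 := by
  unfold Y
  norm_num
  have hb : (0:ℝ) < ((v:ℝ) + 1) * (Nat.factorial (v-1) : ℝ) := by positivity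
  rw [div_le_div_iff₀ hb (by norm_num : (0:ℝ) < (3:ℝ))]
  have hTsub : (∑ i ∈ Finset.Icc (v-1) (n-3), (Nat.factorial i : ℝ)) ≤
      ∑ i ∈ Finset.Icc 1 (n-3), (Nat.factorial i : ℝ) := by
    apply Finset.sum_le_sum_of_subset_of_nonneg
    · apply Finset.Icc_subset_Icc_left; omega
    · intro i _ _; positivity
  have hge : ((v:ℝ) - 1) ≤ (Nat.factorial (v-1) : ℝ) := by
    have := Nat.self_le_factorial (v-1)
    have h' : ((v-1:ℕ):ℝ) ≤ (Nat.factorial (v-1) : ℝ) := by exact_mod_cast this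
    rw [Nat.cast_sub (by omega : 1 ≤ v)] at h'
    exact_mod_cast h'
  have hv2 : (2:ℝ) ≤ (v:ℝ) := by exact_mod_cast h2
  have hT : (0:ℝ) ≤ ∑ i ∈ Finset.Icc 1 (n-3), (Nat.factorial i : ℝ) := by
    apply Finset.sum_nonneg; intro i _; positivity
  have hT' : (0:ℝ) ≤ ∑ i ∈ Finset.Icc (v-1) (n-3), (Nat.factorial i : ℝ) := by
    apply Finset.sum_nonneg; intro i _; positivity
  have hF1 : (0:ℝ) < (Nat.factorial (n-1) : ℝ) := fact_pos _
  have hF2 : (0:ℝ) < (Nat.factorial (n-2) : ℝ) := fact_pos _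
  have h3v : 3 * (v:ℝ) ≤ 2 * (((v:ℝ) + 1) * (Nat.factorial (v-1) : ℝ)) := by
    nlinarith
  have hsum : (Nat.factorial (n-1) : ℝ) + (Nat.factorial (n-2) : ℝ) +
      (∑ i ∈ Finset.Icc (v-1) (n-3), (Nat.factorial i : ℝ)) ≤
      (Nat.factorial (n-1) : ℝ) + (Nat.factorial (n-2) : ℝ) +
      ∑ i ∈ Finset.Icc 1 (n-3), (Nat.factorial i : ℝ) := by linarith
  nlinarith [mul_le_mul h3v hsum (by linarith) (by linarith)]

/-- The Perron vector of `D₁` attains its minimum at `v_n` and its maximum at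
`v_2`, and `γ(D₁) = φ(v_2)/φ(v_n) = (2/3)(n/(n-1) + (1/(n-1)!)∑_{i=1}^{n-3} i!)(n-1)!`. -/
theorem stmt15 (n : ℕ) (hn : 3 ≤ n) (φ : ℕ → ℝ) (hφ : IsPerron n (E1 n) φ) :
    (∀ i ∈ Finset.Icc 1 n, φ n ≤ φ i) ∧
    (∀ i ∈ Finset.Icc 1 n, φ i ≤ φ 2) ∧
    pratio n φ = φ 2 / φ n ∧
    φ 2 / φ n = (2/3 : ℝ) *
      ((n : ℝ) / ((n : ℝ) - 1) +
        (1 / (Nat.factorial (n - 1) : ℝ)) *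
          ∑ i ∈ Finset.Icc 1 (n - 3), (Nat.factorial i : ℝ)) *
      (Nat.factorial (n - 1) : ℝ) := by
  have hmem : ∀ i, 1 ≤ i → i ≤ n → i ∈ Finset.Icc 1 n := by
    intro i h1 h2; simp only [Finset.mem_Icc]; omega
  have hφn : 0 < φ n := hφ.1 n (hmem n (by omega) le_rfl)
  have hkey := key_s15 n hn φ hφ
  have hφ2 : φ 2 = Y n 2 * φ n := hkey 2 le_rfl (by omega)
  have hsum_nonneg : ∀ a : ℕ, (0:ℝ) ≤ ∑ u ∈ Finset.Icc a (n-1), φ u / (u:ℝ) := by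
    intro a
    apply Finset.sum_nonneg
    intro u hu
    simp only [Finset.mem_Icc] at hu
    rcases Nat.eq_zero_or_pos u with rfl | hu1
    · norm_num
    · have := hφ.1 u (hmem u hu1 (by omega))
      positivity
  have hmin : ∀ i ∈ Finset.Icc 1 n, φ n ≤ φ i := by
    intro i hi
    simp only [Finset.mem_Icc] at hi
    rcases eq_or_ne i n with rfl | hin
    · exact le_rfl
    rcases eq_or_ne i 1 with rfl | hi1
    · rw [eqn_one n hn φ hφ]
      have := hsum_nonneg 2
      linarith
    · rw [hkey i (by omega) (by omega)]
      have := Y_ge_one n i hn (by omega) (by omega)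
      nlinarith
  have hmax : ∀ i ∈ Finset.Icc 1 n, φ i ≤ φ 2 := by
    intro i hi
    simp only [Finset.mem_Icc] at hi
    rcases eq_or_ne i 1 with rfl | hi1
    · have e := eqn_mid n hn φ hφ 2 le_rfl (by omega)
      norm_num at e
      have := hsum_nonneg 3
      linarith
    rcases eq_or_ne i n with hin | hin
    · rw [hin, hφ2]
      have := Y_ge_one n 2 hn le_rfl (by omega)
      nlinarith
    · rw [hkey i (by omega) (by omega), hφ2]
      have := Y_le_Y2 n i hn (by omega) (by omega)
      nlinarith
  refine ⟨hmin, hmax, ?_, ?_⟩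
  · have hne : (Finset.Icc 1 n).Nonempty := ⟨1, hmem 1 le_rfl (by omega)⟩
    rw [pratio, dif_pos hne]
    have h1 : (Finset.Icc 1 n).sup' hne φ = φ 2 :=
      le_antisymm (Finset.sup'_le hne φ hmax) (Finset.le_sup' φ (hmem 2 (by omega) (by omega)))
    have h2 : (Finset.Icc 1 n).inf' hne φ = φ n :=
      le_antisymm (Finset.inf'_le φ (hmem n (by omega) le_rfl)) (Finset.le_inf' hne φ hmin)
    rw [h1, h2]
  · rw [hφ2, mul_div_assoc, div_self (ne_of_gt hφn), mul_one]
    unfold Y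
    norm_num
    have hF1 : (Nat.factorial (n-1) : ℝ) = ((n:ℝ) - 1) * (Nat.factorial (n-2) : ℝ) := by
      rw [fact_pred (n-1) (by omega), show n-1-1 = n-2 by omega,
        Nat.cast_sub (by omega : 1 ≤ n)]
      norm_num
    have hn3 : (3:ℝ) ≤ (n:ℝ) := by exact_mod_cast hn
    have hF2 : (0:ℝ) < (Nat.factorial (n-2) : ℝ) := fact_pos _
    rw [hF1]
    have hne1 : (n:ℝ) - 1 ≠ 0 := by linarith
    have hne2 : (Nat.factorial (n-2) : ℝ) ≠ 0 := ne_of_gt hF2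
    field_simp
    ring

end PR
end
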